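/- arXiv:2107.10323 — 7 statements merged into one kernel-verified Lean document; each statement's English description precedes it below -/
import Mathlib

section
/- Lagrangian duality characterization of optimal mechanisms (Lemma 1): Let (q,t) be an IC-IR mechanism. Then (q,t) is optimal if and only if there exists a matrix λ = (λ_ji), j ∈ {1,…,n}, i ∈ {0,1,…,n}, such that: (i) λ_ji ≥ 0 for all j,i; (ii) f_i = Σ_{j=0}^n λ_ij − Σ_{j=1}^n λ_ji for all i ∈ {1,…,n} (flow conservation); (iii) (q_1,…,q_n) maximizes Σ_{i=1}^n f_i ⟨q'_i, φ_i^λ⟩ over all q'_1,…,q'_n ∈ [0,1]^d (virtual welfare maximization); and (iv) λ_ji · (⟨q_j, θ_j⟩ − t_j − ⟨q_i, θ_j⟩ + t_i) = 0 for all j ∈ {1,…,n}, i ∈ {0,1,…,n} (complementary slackness). -/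
open Finset

noncomputable section

/-! Common setup: a multiproduct monopoly with `d` goods (indexed `1,…,d`) and `n` buyer
types (indexed `1,…,n`, with `0` the outside option).  All vectors over goods/types are
encoded as functions `ℕ → ℝ`. -/

/-- Inner product `⟨x, y⟩ = ∑_{k=1}^d x_k y_k` over the goods `1,…,d`. -/
def dot (d : ℕ) (x y : ℕ → ℝ) : ℝ := ∑ k ∈ Finset.Icc 1 d, x k * y k

/-- `f` is a probability vector on types `1,…,n`. -/
def IsProb (n : ℕ) (f : ℕ → ℝ) : Prop :=
  (∀ i ∈ Finset.Icc 1 n, 0 < f i) ∧ ∑ i ∈ Finset.Icc 1 n, f i = 1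

/-- Cumulative distribution `F_i = ∑_{j=1}^i f_j` (so `F_0 = 0`). -/
def Fc (f : ℕ → ℝ) (i : ℕ) : ℝ := ∑ j ∈ Finset.Icc 1 i, f j

/-- `(q,t)` is a mechanism: `(q_0,t_0) = (0,0)` and `q_i ∈ [0,1]^d` for `i ∈ {1,…,n}`. -/
def IsMechanism (d n : ℕ) (q : ℕ → ℕ → ℝ) (t : ℕ → ℝ) : Prop :=
  (∀ k ∈ Finset.Icc 1 d, q 0 k = 0) ∧ t 0 = 0 ∧
    ∀ i ∈ Finset.Icc 1 n, ∀ k ∈ Finset.Icc 1 d, 0 ≤ q i k ∧ q i k ≤ 1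

/-- Incentive compatibility and individual rationality:
`⟨q_j, θ_j⟩ − t_j ≥ ⟨q_i, θ_j⟩ − t_i` for all `j ∈ {1,…,n}`, `i ∈ {0,…,n}`. -/
def ICIR (d n : ℕ) (θ : ℕ → ℕ → ℝ) (q : ℕ → ℕ → ℝ) (t : ℕ → ℝ) : Prop :=
  ∀ j ∈ Finset.Icc 1 n, ∀ i ∈ Finset.Icc 0 n,
    dot d (q j) (θ j) - t j ≥ dot d (q i) (θ j) - t i

/-- Expected revenue `∑_{i=1}^n f_i t_i`. -/
def revenue (n : ℕ) (f t : ℕ → ℝ) : ℝ := ∑ i ∈ Finset.Icc 1 n, f i * t i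

/-- A mechanism is optimal if it is an IC-IR mechanism whose revenue is at least that of
every IC-IR mechanism. -/
def Optimal (d n : ℕ) (θ : ℕ → ℕ → ℝ) (f : ℕ → ℝ) (q : ℕ → ℕ → ℝ) (t : ℕ → ℝ) : Prop :=
  IsMechanism d n q t ∧ ICIR d n θ q t ∧
    ∀ q' : ℕ → ℕ → ℝ, ∀ t' : ℕ → ℝ, IsMechanism d n q' t' → ICIR d n θ q' t' →
      revenue n f t' ≤ revenue n f t

/-- Upgrade pricing: `{q_0, q_1, …, q_n}` is totally ordered in the componentwise order. -/
def UpgradePricing (d n : ℕ) (q : ℕ → ℕ → ℝ) : Prop :=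
  ∀ i ∈ Finset.Icc 0 n, ∀ j ∈ Finset.Icc 0 n,
    (∀ k ∈ Finset.Icc 1 d, q i k ≤ q j k) ∨ (∀ k ∈ Finset.Icc 1 d, q j k ≤ q i k)

/-- `k`-th coordinate of the virtual value of type `i` under multipliers `lam`:
`φ_i^λ = θ_i − (1/f_i) ∑_{j=1}^n λ_{ji} (θ_j − θ_i)`. -/
def virt (n : ℕ) (θ : ℕ → ℕ → ℝ) (f : ℕ → ℝ) (lam : ℕ → ℕ → ℝ) (i k : ℕ) : ℝ :=
  θ i k - (1 / f i) * ∑ j ∈ Finset.Icc 1 n, lam j i * (θ j k - θ i k)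

/-- Nonnegativity of the multipliers `λ_{ji}`, `j ∈ {1,…,n}`, `i ∈ {0,…,n}`. -/
def NonnegLam (n : ℕ) (lam : ℕ → ℕ → ℝ) : Prop :=
  ∀ j ∈ Finset.Icc 1 n, ∀ i ∈ Finset.Icc 0 n, 0 ≤ lam j i

/-- Flow conservation: `f_i = ∑_{j=0}^n λ_{ij} − ∑_{j=1}^n λ_{ji}` for all `i ∈ {1,…,n}`. -/
def FlowConservation (n : ℕ) (f : ℕ → ℝ) (lam : ℕ → ℕ → ℝ) : Prop :=
  ∀ i ∈ Finset.Icc 1 n,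
    f i = ∑ j ∈ Finset.Icc 0 n, lam i j - ∑ j ∈ Finset.Icc 1 n, lam j i

/-- A flow is downward if `λ_{ji} > 0` with `j, i ∈ {1,…,n}` implies `j > i`. -/
def Downward (n : ℕ) (lam : ℕ → ℕ → ℝ) : Prop :=
  ∀ j ∈ Finset.Icc 1 n, ∀ i ∈ Finset.Icc 1 n, 0 < lam j i → i < j

/-- `q'` is a feasible allocation: `q'_i ∈ [0,1]^d` for `i ∈ {1,…,n}`. -/
def InUnitCube (d n : ℕ) (q : ℕ → ℕ → ℝ) : Prop :=
  ∀ i ∈ Finset.Icc 1 n, ∀ k ∈ Finset.Icc 1 d, 0 ≤ q i k ∧ q i k ≤ 1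

/-- Virtual welfare `∑_{i=1}^n f_i ⟨q_i, φ_i⟩` of an allocation `q` for virtual values `phi`. -/
def vw (d n : ℕ) (f : ℕ → ℝ) (phi : ℕ → ℕ → ℝ) (q : ℕ → ℕ → ℝ) : ℝ :=
  ∑ i ∈ Finset.Icc 1 n, f i * ∑ k ∈ Finset.Icc 1 d, q i k * phi i k

/-- Initial (Myersonian) virtual values: `φ_i = θ_i − ((1 − F_i)/f_i)(θ_{i+1} − θ_i)` for
`i < n`, and `φ_n = θ_n`. -/
def initVirt (n : ℕ) (θ : ℕ → ℕ → ℝ) (f : ℕ → ℝ) (i k : ℕ) : ℝ :=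
  if i < n then θ i k - ((1 - Fc f i) / f i) * (θ (i + 1) k - θ i k) else θ i k

/-- Pseudo-revenues `R_i^k = (1 − F_{i−1}) θ_i^k` for `i ∈ {1,…,n}`, with `R_{n+1}^k = 0`. -/
def pseudoRev (n : ℕ) (θ : ℕ → ℕ → ℝ) (f : ℕ → ℝ) (i k : ℕ) : ℝ :=
  if i ≤ n then (1 - Fc f (i - 1)) * θ i k else 0

/-- The cutoff allocation: `q_i^k = 1` iff `i ≥ i^k`. -/
def cutAlloc (cut : ℕ → ℕ) : ℕ → ℕ → ℝ := fun i k => if cut k ≤ i then 1 else 0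

/-- The instance is weakly monotone w.r.t. cutoffs `cut`:
`θ_i^k ≤ θ_j^k` whenever `i ≤ i^k ≤ j`. -/
def WeaklyMonotone (d n : ℕ) (θ : ℕ → ℕ → ℝ) (cut : ℕ → ℕ) : Prop :=
  ∀ k ∈ Finset.Icc 1 d, ∀ i ∈ Finset.Icc 1 n, ∀ j ∈ Finset.Icc 1 n,
    i ≤ cut k → cut k ≤ j → θ i k ≤ θ j k

/-- The instance is regular w.r.t. cutoffs `cut`:
`φ_i^k ≤ 0 ≤ φ_j^k` whenever `i ≤ i^k ≤ j`. -/
def Regular (d n : ℕ) (θ : ℕ → ℕ → ℝ) (f : ℕ → ℝ) (cut : ℕ → ℕ) : Prop :=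
  ∀ k ∈ Finset.Icc 1 d, ∀ i ∈ Finset.Icc 1 n, ∀ j ∈ Finset.Icc 1 n,
    i ≤ cut k → cut k ≤ j → initVirt n θ f i k ≤ 0 ∧ 0 ≤ initVirt n θ f j k

/-- Monotone types: `θ_i^k ≤ θ_j^k` for all `i ≤ j` and all goods `k`. -/
def MonotoneTypes (d n : ℕ) (θ : ℕ → ℕ → ℝ) : Prop :=
  ∀ i ∈ Finset.Icc 1 n, ∀ j ∈ Finset.Icc 1 n, i ≤ j → ∀ k ∈ Finset.Icc 1 d, θ i k ≤ θ j k

/-- Monotone marginal rates of substitution: all values are positive and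
`θ_i^l / θ_i^k ≤ θ_j^l / θ_j^k` whenever `i ≤ j` and `k ≤ l`. -/
def MonotoneMRS (d n : ℕ) (θ : ℕ → ℕ → ℝ) : Prop :=
  (∀ i ∈ Finset.Icc 1 n, ∀ k ∈ Finset.Icc 1 d, 0 < θ i k) ∧
    ∀ i ∈ Finset.Icc 1 n, ∀ j ∈ Finset.Icc 1 n, i ≤ j →
      ∀ k ∈ Finset.Icc 1 d, ∀ l ∈ Finset.Icc 1 d, k ≤ l →
        θ i l / θ i k ≤ θ j l / θ j k

/-- The initial flow `λ̂_{ji} = 1 − F_i` if `j = i + 1`, and `0` otherwise. -/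
def lamHat (f : ℕ → ℝ) : ℕ → ℕ → ℝ := fun j i => if j = i + 1 then 1 - Fc f i else 0

/-- Extended cutoffs: `i^0 = 1` and `i^{d+1} = n`. -/
def extCut (n d : ℕ) (cut : ℕ → ℕ) (k : ℕ) : ℕ :=
  if k = 0 then 1 else if k ≤ d then cut k else n

/-- The ironing update `λ'(γ)` of `lam` at type `i`:
`λ'_{ji} = γ λ_{ji}` and `λ'_{j(i−1)} = λ_{j(i−1)} + (1−γ) λ_{ji}` for `j > i`;
`λ'_{i(i−1)} = λ_{i(i−1)} − (1−γ) ∑_{j=i+1}^n λ_{ji}`; other entries unchanged. -/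
def ironUpdate (n : ℕ) (lam : ℕ → ℕ → ℝ) (i : ℕ) (γ : ℝ) : ℕ → ℕ → ℝ :=
  fun j r =>
    if i < j ∧ r = i then γ * lam j i
    else if i < j ∧ r = i - 1 then lam j (i - 1) + (1 - γ) * lam j i
    else if j = i ∧ r = i - 1 then
      lam i (i - 1) - (1 - γ) * ∑ j' ∈ Finset.Icc (i + 1) n, lam j' i
    else lam j r

/-- Pseudo-revenue associated to a flow: `R_i^{λ,k} = ∑_{j=i}^n f_j φ_j^{λ,k}`
(so `R_{n+1}^{λ,k} = 0`). -/
def flowRev (n : ℕ) (θ : ℕ → ℕ → ℝ) (f : ℕ → ℝ) (lam : ℕ → ℕ → ℝ) (i k : ℕ) : ℝ :=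
  ∑ j ∈ Finset.Icc i n, f j * virt n θ f lam j k

/-- A finite sequence `(R_i)_{i=1}^n` is quasi-concave: for some `i' ∈ {1,…,n}`,
`R_i ≥ R_j` whenever `i' ≤ i ≤ j` or `j ≤ i ≤ i'` (indices in `{1,…,n}`). -/
def QuasiConcaveSeq (n : ℕ) (R : ℕ → ℝ) : Prop :=
  ∃ i' ∈ Finset.Icc 1 n, ∀ i ∈ Finset.Icc 1 n, ∀ j ∈ Finset.Icc 1 n,
    ((i' ≤ i ∧ i ≤ j) ∨ (j ≤ i ∧ i ≤ i')) → R j ≤ R i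

/-- `Rbar` is the quasi-concave closure of `R` on `{1,…,n}`: the pointwise smallest
quasi-concave sequence dominating `R`. -/
def IsQCClosure (n : ℕ) (R Rbar : ℕ → ℝ) : Prop :=
  QuasiConcaveSeq n Rbar ∧ (∀ i ∈ Finset.Icc 1 n, R i ≤ Rbar i) ∧
    ∀ S : ℕ → ℝ, QuasiConcaveSeq n S → (∀ i ∈ Finset.Icc 1 n, R i ≤ S i) →
      ∀ i ∈ Finset.Icc 1 n, Rbar i ≤ S i

/-- `{a,…,b}` is a candidate ironing interval for the sequence `R` with closure `Rbar`:
an inclusion-maximal contiguous set of indices where `Rbar ≠ R`. -/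
def CandInterval (n : ℕ) (R Rbar : ℕ → ℝ) (a b : ℕ) : Prop :=
  1 ≤ a ∧ a ≤ b ∧ b ≤ n ∧ (∀ i, a ≤ i → i ≤ b → Rbar i ≠ R i) ∧
    (a = 1 ∨ Rbar (a - 1) = R (a - 1)) ∧ (b = n ∨ Rbar (b + 1) = R (b + 1))

/-- The instance is mostly regular w.r.t. cutoffs `cut`, where `Rbar · k` is the
quasi-concave closure of the pseudo-revenues of item `k`:
(1) no partial overlap of candidate ironing intervals of neighboring items;
(2) no candidate ironing interval contains a neighboring cutoff;
(3) not-too-shuffled values on candidate ironing intervals between cutoffs. -/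
def MostlyRegular (d n : ℕ) (θ : ℕ → ℕ → ℝ) (f : ℕ → ℝ) (cut : ℕ → ℕ)
    (Rbar : ℕ → ℕ → ℝ) : Prop :=
  ∀ k, 1 ≤ k → k + 1 ≤ d →
    (∀ a b c e,
      CandInterval n (fun i => pseudoRev n θ f i k) (fun i => Rbar i k) a b →
      CandInterval n (fun i => pseudoRev n θ f i (k + 1)) (fun i => Rbar i (k + 1)) c e →
      (b + 1 < c ∨ e + 1 < a ∨ (c < a ∧ b < e) ∨ (a < c ∧ e < b))) ∧
    (∀ a b,
      (CandInterval n (fun i => pseudoRev n θ f i k) (fun i => Rbar i k) a b ∨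
        CandInterval n (fun i => pseudoRev n θ f i (k + 1)) (fun i => Rbar i (k + 1)) a b) →
      ¬(a ≤ cut k ∧ cut k ≤ b) ∧ ¬(a ≤ cut (k + 1) ∧ cut (k + 1) ≤ b)) ∧
    (∀ a b,
      (CandInterval n (fun i => pseudoRev n θ f i k) (fun i => Rbar i k) a b ∨
        CandInterval n (fun i => pseudoRev n θ f i (k + 1)) (fun i => Rbar i (k + 1)) a b) →
      cut k + 1 ≤ a → b + 1 ≤ cut (k + 1) →
      ∀ i, a ≤ i → i ≤ b → θ a (k + 1) ≤ θ i (k + 1) ∧ θ b k ≤ θ (b + 1) k)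

/-- Allocation of the separate pricing mechanism at prices `p`:
`q_i^k = 1` iff `θ_i^k ≥ p_k` (and `q_0 = 0`). -/
def sepQ (θ : ℕ → ℕ → ℝ) (p : ℕ → ℝ) : ℕ → ℕ → ℝ :=
  fun i k => if i = 0 then 0 else if p k ≤ θ i k then 1 else 0

/-- Transfers of the separate pricing mechanism at prices `p`: `t_i = ∑_{k=1}^d p_k q_i^k`. -/
def sepT (d : ℕ) (θ : ℕ → ℕ → ℝ) (p : ℕ → ℝ) : ℕ → ℝ :=
  fun i => ∑ k ∈ Finset.Icc 1 d, p k * sepQ θ p i k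


open Finset

section Farkas

variable {E : Type*} [AddCommGroup E] [Module ℝ E]
variable (B : E → E → ℝ)

theorem my_farkas {κ : Type*}
    (hB0 : ∀ v, 0 ≤ B v v)
    (hBker : ∀ v, B v v = 0 → ∀ z, B v z = 0)
    (hBl : ∀ (c : ℝ) (u v z : E), B (u + c • v) z = B u z + c * B v z)
    (hBr : ∀ (c : ℝ) (z u v : E), B z (u + c • v) = B z u + c * B z v)
    (s : Finset κ) :
    ∀ (a : κ → E) (b : E),
      (∃ y : κ → ℝ, (∀ j, 0 ≤ y j) ∧ ∀ z, B b z = ∑ j ∈ s, y j * B (a j) z) ∨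
      (∃ x : E, (∀ j ∈ s, B (a j) x ≤ 0) ∧ 0 < B b x) := by
  classical
  induction s using Finset.cons_induction with
  | empty =>
    intro a b
    by_cases hb : B b b = 0
    · exact Or.inl ⟨fun _ => 0, fun _ => le_rfl, fun z => by simpa using hBker b hb z⟩
    · exact Or.inr ⟨b, by simp, lt_of_le_of_ne (hB0 b) (Ne.symm hb)⟩
  | cons j₀ s hj ih =>
    intro a b
    rcases ih a b with ⟨y, hy, hrep⟩ | ⟨x, hx, hbx⟩
    · refine Or.inl ⟨Function.update y j₀ 0, ?_, ?_⟩
      · intro j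
        rcases eq_or_ne j j₀ with rfl | h
        · simp
        · simp [Function.update_of_ne h, hy j]
      · intro z
        rw [Finset.sum_cons]
        simp only [Function.update_self]
        rw [hrep z]
        have : ∀ j ∈ s, Function.update y j₀ 0 j * B (a j) z = y j * B (a j) z := by
          intro j hjs
          have : j ≠ j₀ := fun h => hj (h ▸ hjs)
          rw [Function.update_of_ne this]
        rw [Finset.sum_congr rfl this]
        ring
    · by_cases hm : B (a j₀) x ≤ 0
      · refine Or.inr ⟨x, ?_, hbx⟩
        intro j hjs
        rcases Finset.mem_cons.mp hjs with rfl | hjs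
        · exact hm
        · exact hx j hjs
      · push_neg at hm
        have hm0 : B (a j₀) x ≠ 0 := ne_of_gt hm
        set a' : κ → E := fun j => a j + (-(B (a j) x / B (a j₀) x)) • a j₀ with ha'
        set b' : E := b + (-(B b x / B (a j₀) x)) • a j₀ with hb'
        have ha'B : ∀ (j : κ) (z : E),
            B (a' j) z = B (a j) z - (B (a j) x / B (a j₀) x) * B (a j₀) z := by
          intro j z; rw [ha']; rw [hBl]; ring
        have hb'B : ∀ z : E, B b' z = B b z - (B b x / B (a j₀) x) * B (a j₀) z := by
          intro z; rw [hb', hBl]; ring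
        rcases ih a' b' with ⟨y, hy, hrep⟩ | ⟨z, hz, hbz⟩
        · set μ : ℝ := B b x / B (a j₀) x - ∑ j ∈ s, y j * (B (a j) x / B (a j₀) x) with hμ
          have hμ0 : 0 ≤ μ := by
            have h1 : 0 < B b x / B (a j₀) x := div_pos hbx hm
            have h2 : ∑ j ∈ s, y j * (B (a j) x / B (a j₀) x) ≤ 0 := by
              apply Finset.sum_nonpos
              intro j hjs
              exact mul_nonpos_of_nonneg_of_nonpos (hy j)
                (div_nonpos_of_nonpos_of_nonneg (hx j hjs) hm.le)
            rw [hμ]; linarith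
          refine Or.inl ⟨Function.update y j₀ μ, ?_, ?_⟩
          · intro j
            rcases eq_or_ne j j₀ with rfl | h
            · simpa using hμ0
            · simp [Function.update_of_ne h, hy j]
          · intro w
            rw [Finset.sum_cons, Function.update_self]
            have hupd : ∀ j ∈ s, Function.update y j₀ μ j * B (a j) w = y j * B (a j) w := by
              intro j hjs
              have : j ≠ j₀ := fun h => hj (h ▸ hjs)
              rw [Function.update_of_ne this]
            rw [Finset.sum_congr rfl hupd]
            have h1 := hrep w
            rw [hb'B w] at h1
            have h2 : ∑ j ∈ s, y j * B (a' j) w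
                = ∑ j ∈ s, y j * B (a j) w
                  - (∑ j ∈ s, y j * (B (a j) x / B (a j₀) x)) * B (a j₀) w := by
              rw [Finset.sum_mul, ← Finset.sum_sub_distrib]
              apply Finset.sum_congr rfl
              intro j hjs
              rw [ha'B]; ring
            rw [h2] at h1
            rw [hμ]
            linarith
        · refine Or.inr ⟨z + (-(B (a j₀) z / B (a j₀) x)) • x, ?_, ?_⟩
          · intro j hjs
            rw [hBr]
            rcases Finset.mem_cons.mp hjs with rfl | hjs
            · field_simp; norm_num
            · have := hz j hjs
              rw [ha'B] at this
              have heq : B (a j) z + -(B (a j₀) z / B (a j₀) x) * B (a j) x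
                  = B (a j) z - B (a j) x / B (a j₀) x * B (a j₀) z := by
                field_simp; ring
              rw [heq]; exact this
          · rw [hBr]
            have := hbz
            rw [hb'B] at this
            have heq : B b z + -(B (a j₀) z / B (a j₀) x) * B b x
                = B b z - B b x / B (a j₀) x * B (a j₀) z := by
              field_simp; ring
            rw [heq]; exact this

end Farkas
section Farkas2
variable {E : Type*} [AddCommGroup E] [Module ℝ E] (B : E → E → ℝ)

theorem my_kkt {κ : Type*} [DecidableEq κ]
    (hB0 : ∀ v, 0 ≤ B v v)
    (hBker : ∀ v, B v v = 0 → ∀ z, B v z = 0)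
    (hBl : ∀ (c : ℝ) (u v z : E), B (u + c • v) z = B u z + c * B v z)
    (hBr : ∀ (c : ℝ) (z u v : E), B z (u + c • v) = B z u + c * B z v)
    (s : Finset κ) (A : κ → E) (bb : κ → ℝ) (c x0 : E)
    (hfeas : ∀ j ∈ s, B (A j) x0 ≤ bb j)
    (hopt : ∀ x, (∀ j ∈ s, B (A j) x ≤ bb j) → B c x ≤ B c x0) :
    ∃ y : κ → ℝ, (∀ j, 0 ≤ y j) ∧ (∀ z, B c z = ∑ j ∈ s, y j * B (A j) z) ∧
      ∀ j ∈ s, y j * (bb j - B (A j) x0) = 0 := by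
  classical
  set act : Finset κ := s.filter (fun j => B (A j) x0 = bb j) with hact
  rcases my_farkas B hB0 hBker hBl hBr act A c with ⟨y, hy, hrep⟩ | ⟨x, hx, hcx⟩
  · refine ⟨fun j => if j ∈ act then y j else 0, ?_, ?_, ?_⟩
    · intro j
      by_cases h : j ∈ act <;> simp [h, hy j]
    · intro z
      rw [hrep z, hact, Finset.sum_filter]
      apply Finset.sum_congr rfl
      intro j hjs
      by_cases h : B (A j) x0 = bb j <;> simp [hact, h, hjs]
    · intro j hjs
      by_cases h : B (A j) x0 = bb j
      · simp [h]
      · simp [hact, h, hjs]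
  · exfalso
    set T : Finset κ := s.filter (fun j => ¬ (B (A j) x0 = bb j)) with hT
    set g : κ → ℝ := fun j => if 0 < B (A j) x then (bb j - B (A j) x0) / B (A j) x else 1
      with hg
    set G : Finset ℝ := insert (1:ℝ) (T.image g) with hG
    have hGne : G.Nonempty := ⟨1, Finset.mem_insert_self _ _⟩
    set ε : ℝ := G.min' hGne with hε
    have hslack : ∀ j ∈ T, 0 < bb j - B (A j) x0 := by
      intro j hjT
      rw [hT, Finset.mem_filter] at hjT
      have := hfeas j hjT.1
      cases lt_or_eq_of_le this with
      | inl h => linarith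
      | inr h => exact absurd h hjT.2
    have hgpos : ∀ j ∈ T, 0 < g j := by
      intro j hjT
      by_cases hax : 0 < B (A j) x
      · have : g j = (bb j - B (A j) x0) / B (A j) x := by rw [hg]; simp [hax]
        rw [this]
        exact div_pos (hslack j hjT) hax
      · have : g j = 1 := by rw [hg]; simp [hax]
        rw [this]; exact one_pos
    have hεpos : 0 < ε := by
      have hmem := Finset.min'_mem G hGne
      rw [← hε] at hmem
      rw [hG, Finset.mem_insert] at hmem
      rcases hmem with h | h
      · rw [h]; exact one_pos
      · rcases Finset.mem_image.mp h with ⟨j, hjT, hje⟩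
        rw [← hje]; exact hgpos j hjT
    have hfeas' : ∀ j ∈ s, B (A j) (x0 + ε • x) ≤ bb j := by
      intro j hjs
      rw [hBr]
      by_cases h : B (A j) x0 = bb j
      · have hjact : j ∈ act := by rw [hact, Finset.mem_filter]; exact ⟨hjs, h⟩
        have := hx j hjact
        nlinarith
      · have hjT : j ∈ T := by rw [hT, Finset.mem_filter]; exact ⟨hjs, h⟩
        have hsl := hslack j hjT
        by_cases hax : 0 < B (A j) x
        · have hgj : g j = (bb j - B (A j) x0) / B (A j) x := by rw [hg]; simp [hax]
          have hεle : ε ≤ g j := by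
            apply Finset.min'_le
            rw [hG, Finset.mem_insert]
            exact Or.inr (Finset.mem_image_of_mem g hjT)
          have : ε * B (A j) x ≤ bb j - B (A j) x0 := by
            rw [hgj, le_div_iff₀ hax] at hεle
            linarith
          linarith
        · push_neg at hax
          nlinarith
    have := hopt (x0 + ε • x) hfeas'
    rw [hBr] at this
    nlinarith

end Farkas2
section LDAux

lemma ld_Icc_zero (n : ℕ) : Finset.Icc 0 n = insert 0 (Finset.Icc 1 n) := by
  ext r; simp only [Finset.mem_Icc, Finset.mem_insert]; omega

/-- Bilinear pairing on the LP variable space. -/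
def ldB (d n : ℕ) (u v : (ℕ → ℝ) × (ℕ → ℕ → ℝ)) : ℝ :=
  (∑ i ∈ Finset.Icc 1 n, u.1 i * v.1 i) +
    ∑ i ∈ Finset.Icc 1 n, ∑ k ∈ Finset.Icc 1 d, u.2 i k * v.2 i k

lemma ldB_nonneg (d n : ℕ) (v : (ℕ → ℝ) × (ℕ → ℕ → ℝ)) : 0 ≤ ldB d n v v := by
  unfold ldB
  have h1 : 0 ≤ ∑ i ∈ Finset.Icc 1 n, v.1 i * v.1 i :=
    Finset.sum_nonneg fun i _ => mul_self_nonneg _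
  have h2 : 0 ≤ ∑ i ∈ Finset.Icc 1 n, ∑ k ∈ Finset.Icc 1 d, v.2 i k * v.2 i k :=
    Finset.sum_nonneg fun i _ => Finset.sum_nonneg fun k _ => mul_self_nonneg _
  linarith

lemma ldB_ker (d n : ℕ) (v : (ℕ → ℝ) × (ℕ → ℕ → ℝ)) (h : ldB d n v v = 0)
    (z : (ℕ → ℝ) × (ℕ → ℕ → ℝ)) : ldB d n v z = 0 := by
  unfold ldB at h ⊢
  have h1 : 0 ≤ ∑ i ∈ Finset.Icc 1 n, v.1 i * v.1 i :=
    Finset.sum_nonneg fun i _ => mul_self_nonneg _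
  have h2 : 0 ≤ ∑ i ∈ Finset.Icc 1 n, ∑ k ∈ Finset.Icc 1 d, v.2 i k * v.2 i k :=
    Finset.sum_nonneg fun i _ => Finset.sum_nonneg fun k _ => mul_self_nonneg _
  have h1' : ∑ i ∈ Finset.Icc 1 n, v.1 i * v.1 i = 0 := by linarith
  have h2' : ∑ i ∈ Finset.Icc 1 n, ∑ k ∈ Finset.Icc 1 d, v.2 i k * v.2 i k = 0 := by linarith
  have hv1 : ∀ i ∈ Finset.Icc 1 n, v.1 i = 0 := by
    intro i hi
    have := (Finset.sum_eq_zero_iff_of_nonneg (fun i _ => mul_self_nonneg (v.1 i))).mp h1' i hi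
    exact mul_self_eq_zero.mp this
  have hv2 : ∀ i ∈ Finset.Icc 1 n, ∀ k ∈ Finset.Icc 1 d, v.2 i k = 0 := by
    intro i hi k hk
    have hin := (Finset.sum_eq_zero_iff_of_nonneg
      (fun i _ => Finset.sum_nonneg fun k _ => mul_self_nonneg (v.2 i k))).mp h2' i hi
    have := (Finset.sum_eq_zero_iff_of_nonneg (fun k _ => mul_self_nonneg (v.2 i k))).mp hin k hk
    exact mul_self_eq_zero.mp this
  have e1 : ∑ i ∈ Finset.Icc 1 n, v.1 i * z.1 i = 0 :=
    Finset.sum_eq_zero fun i hi => by rw [hv1 i hi, zero_mul]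
  have e2 : ∑ i ∈ Finset.Icc 1 n, ∑ k ∈ Finset.Icc 1 d, v.2 i k * z.2 i k = 0 :=
    Finset.sum_eq_zero fun i hi => Finset.sum_eq_zero fun k hk => by rw [hv2 i hi k hk, zero_mul]
  rw [e1, e2, add_zero]

lemma ldB_addl (d n : ℕ) (c : ℝ) (u v z : (ℕ → ℝ) × (ℕ → ℕ → ℝ)) :
    ldB d n (u + c • v) z = ldB d n u z + c * ldB d n v z := by
  unfold ldB
  have e1 : ∀ i, (u + c • v).1 i = u.1 i + c * v.1 i := fun i => rfl
  have e2 : ∀ i k, (u + c • v).2 i k = u.2 i k + c * v.2 i k := fun i k => rfl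
  have h1 : ∑ i ∈ Finset.Icc 1 n, (u + c • v).1 i * z.1 i
      = ∑ i ∈ Finset.Icc 1 n, u.1 i * z.1 i + c * ∑ i ∈ Finset.Icc 1 n, v.1 i * z.1 i := by
    rw [Finset.mul_sum, ← Finset.sum_add_distrib]
    exact Finset.sum_congr rfl fun i _ => by rw [e1]; ring
  have h2 : ∑ i ∈ Finset.Icc 1 n, ∑ k ∈ Finset.Icc 1 d, (u + c • v).2 i k * z.2 i k
      = ∑ i ∈ Finset.Icc 1 n, ∑ k ∈ Finset.Icc 1 d, u.2 i k * z.2 i k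
        + c * ∑ i ∈ Finset.Icc 1 n, ∑ k ∈ Finset.Icc 1 d, v.2 i k * z.2 i k := by
    rw [Finset.mul_sum, ← Finset.sum_add_distrib]
    refine Finset.sum_congr rfl fun i _ => ?_
    rw [Finset.mul_sum, ← Finset.sum_add_distrib]
    exact Finset.sum_congr rfl fun k _ => by rw [e2]; ring
  rw [h1, h2]; ring

lemma ldB_addr (d n : ℕ) (c : ℝ) (z u v : (ℕ → ℝ) × (ℕ → ℕ → ℝ)) :
    ldB d n z (u + c • v) = ldB d n z u + c * ldB d n z v := by
  unfold ldB
  have e1 : ∀ i, (u + c • v).1 i = u.1 i + c * v.1 i := fun i => rfl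
  have e2 : ∀ i k, (u + c • v).2 i k = u.2 i k + c * v.2 i k := fun i k => rfl
  have h1 : ∑ i ∈ Finset.Icc 1 n, z.1 i * (u + c • v).1 i
      = ∑ i ∈ Finset.Icc 1 n, z.1 i * u.1 i + c * ∑ i ∈ Finset.Icc 1 n, z.1 i * v.1 i := by
    rw [Finset.mul_sum, ← Finset.sum_add_distrib]
    exact Finset.sum_congr rfl fun i _ => by rw [e1]; ring
  have h2 : ∑ i ∈ Finset.Icc 1 n, ∑ k ∈ Finset.Icc 1 d, z.2 i k * (u + c • v).2 i k
      = ∑ i ∈ Finset.Icc 1 n, ∑ k ∈ Finset.Icc 1 d, z.2 i k * u.2 i k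
        + c * ∑ i ∈ Finset.Icc 1 n, ∑ k ∈ Finset.Icc 1 d, z.2 i k * v.2 i k := by
    rw [Finset.mul_sum, ← Finset.sum_add_distrib]
    refine Finset.sum_congr rfl fun i _ => ?_
    rw [Finset.mul_sum, ← Finset.sum_add_distrib]
    exact Finset.sum_congr rfl fun k _ => by rw [e2]; ring
  rw [h1, h2]; ring

/-- Constraint rows. -/
def ldA (θ : ℕ → ℕ → ℝ) : (ℕ × ℕ) ⊕ ((ℕ × ℕ) ⊕ (ℕ × ℕ)) → (ℕ → ℝ) × (ℕ → ℕ → ℝ)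
  | Sum.inl (j, i) =>
      (fun r => (if r = j then (1:ℝ) else 0) - (if r = i then 1 else 0),
       fun r k => (if r = i then θ j k else 0) - (if r = j then θ j k else 0))
  | Sum.inr (Sum.inl (i, k)) =>
      (fun _ => 0, fun r k' => if r = i ∧ k' = k then 1 else 0)
  | Sum.inr (Sum.inr (i, k)) =>
      (fun _ => 0, fun r k' => if r = i ∧ k' = k then -1 else 0)

def ldbb : (ℕ × ℕ) ⊕ ((ℕ × ℕ) ⊕ (ℕ × ℕ)) → ℝ
  | Sum.inl _ => 0
  | Sum.inr (Sum.inl _) => 1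
  | Sum.inr (Sum.inr _) => 0

def lds (d n : ℕ) : Finset ((ℕ × ℕ) ⊕ ((ℕ × ℕ) ⊕ (ℕ × ℕ))) :=
  ((Finset.Icc 1 n ×ˢ Finset.Icc 0 n).image Sum.inl) ∪
    ((Finset.Icc 1 n ×ˢ Finset.Icc 1 d).image (fun p => Sum.inr (Sum.inl p))) ∪
    ((Finset.Icc 1 n ×ˢ Finset.Icc 1 d).image (fun p => Sum.inr (Sum.inr p)))

lemma mem_lds_inl (d n j i : ℕ) (hj : j ∈ Finset.Icc 1 n) (hi : i ∈ Finset.Icc 0 n) :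
    (Sum.inl (j, i) : (ℕ × ℕ) ⊕ ((ℕ × ℕ) ⊕ (ℕ × ℕ))) ∈ lds d n := by
  unfold lds
  rw [Finset.mem_union, Finset.mem_union]
  exact Or.inl (Or.inl (Finset.mem_image_of_mem _ (Finset.mem_product.mpr ⟨hj, hi⟩)))

lemma mem_lds_ub (d n i k : ℕ) (hi : i ∈ Finset.Icc 1 n) (hk : k ∈ Finset.Icc 1 d) :
    (Sum.inr (Sum.inl (i, k)) : (ℕ × ℕ) ⊕ ((ℕ × ℕ) ⊕ (ℕ × ℕ))) ∈ lds d n := by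
  unfold lds
  rw [Finset.mem_union, Finset.mem_union]
  exact Or.inl (Or.inr (Finset.mem_image_of_mem _ (Finset.mem_product.mpr ⟨hi, hk⟩)))

lemma mem_lds_lb (d n i k : ℕ) (hi : i ∈ Finset.Icc 1 n) (hk : k ∈ Finset.Icc 1 d) :
    (Sum.inr (Sum.inr (i, k)) : (ℕ × ℕ) ⊕ ((ℕ × ℕ) ⊕ (ℕ × ℕ))) ∈ lds d n := by
  unfold lds
  rw [Finset.mem_union, Finset.mem_union]
  exact Or.inr (Finset.mem_image_of_mem _ (Finset.mem_product.mpr ⟨hi, hk⟩))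

lemma lds_sum (d n : ℕ) (g : (ℕ × ℕ) ⊕ ((ℕ × ℕ) ⊕ (ℕ × ℕ)) → ℝ) :
    ∑ j ∈ lds d n, g j
      = ∑ p ∈ Finset.Icc 1 n ×ˢ Finset.Icc 0 n, g (Sum.inl p)
        + ∑ p ∈ Finset.Icc 1 n ×ˢ Finset.Icc 1 d, g (Sum.inr (Sum.inl p))
        + ∑ p ∈ Finset.Icc 1 n ×ˢ Finset.Icc 1 d, g (Sum.inr (Sum.inr p)) := by
  unfold lds
  rw [Finset.sum_union, Finset.sum_union]
  · rw [Finset.sum_image (fun _ _ _ _ h => by simpa using h),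
      Finset.sum_image (fun _ _ _ _ h => by simpa using h),
      Finset.sum_image (fun _ _ _ _ h => by simpa using h)]
  · rw [Finset.disjoint_left]
    rintro x hx hy
    rcases Finset.mem_image.mp hx with ⟨p, _, rfl⟩
    rcases Finset.mem_image.mp hy with ⟨p', _, h⟩
    simp at h
  · rw [Finset.disjoint_left]
    rintro x hx hy
    rcases Finset.mem_union.mp hx with hx | hx
    · rcases Finset.mem_image.mp hx with ⟨p, _, rfl⟩
      rcases Finset.mem_image.mp hy with ⟨p', _, h⟩
      simp at h
    · rcases Finset.mem_image.mp hx with ⟨p, _, rfl⟩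
      rcases Finset.mem_image.mp hy with ⟨p', _, h⟩
      simp at h

end LDAux
section LDEval

lemma ld_sum_ind_mul (s : Finset ℕ) (w : ℕ → ℝ) (i : ℕ) (c : ℝ) :
    ∑ r ∈ s, (if r = i then c else 0) * w r = if i ∈ s then c * w i else 0 := by
  simp only [ite_mul, zero_mul]
  rw [Finset.sum_ite_eq' s i]

lemma ld_sum_ite_const (c : Prop) [Decidable c] (s : Finset ℕ) (g h : ℕ → ℝ) :
    ∑ k ∈ s, (if c then g k else 0) * h k = if c then ∑ k ∈ s, g k * h k else 0 := by
  split <;> simp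

lemma ldB_IC_eval (d n : ℕ) (θ : ℕ → ℕ → ℝ) (j i : ℕ) (hj : j ∈ Finset.Icc 1 n)
    (z : (ℕ → ℝ) × (ℕ → ℕ → ℝ)) :
    ldB d n (ldA θ (Sum.inl (j, i))) z
      = (z.1 j - (if i ∈ Finset.Icc 1 n then z.1 i else 0))
        + ((if i ∈ Finset.Icc 1 n then ∑ k ∈ Finset.Icc 1 d, θ j k * z.2 i k else 0)
            - ∑ k ∈ Finset.Icc 1 d, θ j k * z.2 j k) := by
  unfold ldB ldA
  have h1 : ∑ r ∈ Finset.Icc 1 n,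
      ((if r = j then (1:ℝ) else 0) - (if r = i then 1 else 0)) * z.1 r
      = z.1 j - (if i ∈ Finset.Icc 1 n then z.1 i else 0) := by
    simp only [sub_mul]
    rw [Finset.sum_sub_distrib, ld_sum_ind_mul, ld_sum_ind_mul, if_pos hj]
    simp
  have h2 : ∑ r ∈ Finset.Icc 1 n, ∑ k ∈ Finset.Icc 1 d,
      ((if r = i then θ j k else 0) - (if r = j then θ j k else 0)) * z.2 r k
      = (if i ∈ Finset.Icc 1 n then ∑ k ∈ Finset.Icc 1 d, θ j k * z.2 i k else 0)
          - ∑ k ∈ Finset.Icc 1 d, θ j k * z.2 j k := by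
    have hin : ∀ r ∈ Finset.Icc 1 n, ∑ k ∈ Finset.Icc 1 d,
        ((if r = i then θ j k else 0) - (if r = j then θ j k else 0)) * z.2 r k
        = (if r = i then ∑ k ∈ Finset.Icc 1 d, θ j k * z.2 r k else 0)
          - (if r = j then ∑ k ∈ Finset.Icc 1 d, θ j k * z.2 r k else 0) := by
      intro r _
      simp only [sub_mul]
      rw [Finset.sum_sub_distrib, ld_sum_ite_const, ld_sum_ite_const]
    rw [Finset.sum_congr rfl hin, Finset.sum_sub_distrib,
      Finset.sum_ite_eq' (Finset.Icc 1 n) i, Finset.sum_ite_eq' (Finset.Icc 1 n) j, if_pos hj]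
  rw [h1, h2]

lemma ldB_box_eval (d n i k : ℕ) (hi : i ∈ Finset.Icc 1 n) (hk : k ∈ Finset.Icc 1 d)
    (c : ℝ) (z : (ℕ → ℝ) × (ℕ → ℕ → ℝ)) :
    ldB d n ((fun _ => (0:ℝ)), fun r k' => if r = i ∧ k' = k then c else 0) z
      = c * z.2 i k := by
  unfold ldB
  have h1 : ∑ r ∈ Finset.Icc 1 n, (0:ℝ) * z.1 r = 0 := by simp
  have h2 : ∀ r ∈ Finset.Icc 1 n, ∑ k' ∈ Finset.Icc 1 d,
      (if r = i ∧ k' = k then c else 0) * z.2 r k'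
      = if r = i then c * z.2 r k else 0 := by
    intro r _
    by_cases hr : r = i
    · have he : ∀ k', (if r = i ∧ k' = k then c else 0) = (if k' = k then c else 0) := by
        intro k'; simp [hr]
      rw [Finset.sum_congr rfl fun k' _ => by rw [he k']]
      rw [ld_sum_ind_mul, if_pos hk, if_pos hr]
    · have he : ∀ k', (if r = i ∧ k' = k then c else 0) = (0:ℝ) := by
        intro k'; simp [hr]
      rw [Finset.sum_congr rfl fun k' _ => by rw [he k']]
      simp [hr]
  rw [h1, Finset.sum_congr rfl h2, Finset.sum_ite_eq' (Finset.Icc 1 n) i, if_pos hi, zero_add]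

/-- basis vector for transfers -/
def ldet (i : ℕ) : (ℕ → ℝ) × (ℕ → ℕ → ℝ) := (fun r => if r = i then (1:ℝ) else 0, fun _ _ => 0)

/-- basis vector for allocations -/
def ldeq (i k : ℕ) : (ℕ → ℝ) × (ℕ → ℕ → ℝ) :=
  (fun _ => 0, fun r k' => if r = i ∧ k' = k then (1:ℝ) else 0)

lemma ldB_c_eval (d n : ℕ) (f : ℕ → ℝ) (z : (ℕ → ℝ) × (ℕ → ℕ → ℝ)) :
    ldB d n (f, fun _ _ => 0) z = ∑ i ∈ Finset.Icc 1 n, f i * z.1 i := by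
  unfold ldB; simp

lemma ldB_IC_et (d n : ℕ) (θ : ℕ → ℕ → ℝ) (j r i : ℕ) (hj : j ∈ Finset.Icc 1 n)
    (hi : i ∈ Finset.Icc 1 n) :
    ldB d n (ldA θ (Sum.inl (j, r))) (ldet i)
      = (if j = i then (1:ℝ) else 0) - (if r = i then 1 else 0) := by
  rw [ldB_IC_eval d n θ j r hj]
  simp only [ldet, mul_zero, Finset.sum_const_zero, ite_self, sub_zero, add_zero]
  congr 1
  by_cases hr : r = i
  · subst hr; rw [if_pos hi]
  · simp [hr]

lemma ldB_box_et (d n i k a : ℕ) (hi : i ∈ Finset.Icc 1 n) (hk : k ∈ Finset.Icc 1 d)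
    (c : ℝ) :
    ldB d n ((fun _ => (0:ℝ)), fun r k' => if r = i ∧ k' = k then c else 0) (ldet a) = 0 := by
  rw [ldB_box_eval d n i k hi hk]
  unfold ldet
  simp

lemma ldB_IC_eq (d n : ℕ) (θ : ℕ → ℕ → ℝ) (j r i k : ℕ) (hj : j ∈ Finset.Icc 1 n)
    (hi : i ∈ Finset.Icc 1 n) (hk : k ∈ Finset.Icc 1 d) :
    ldB d n (ldA θ (Sum.inl (j, r))) (ldeq i k)
      = (if r = i then θ j k else 0) - (if j = i then θ j k else 0) := by
  have hsum : ∀ a, ∑ k' ∈ Finset.Icc 1 d, θ j k' * (if a = i ∧ k' = k then (1:ℝ) else 0)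
      = if a = i then θ j k else 0 := by
    intro a
    by_cases ha : a = i
    · subst ha
      simp only [true_and, mul_ite, mul_one, mul_zero, eq_self_iff_true, if_true]
      rw [Finset.sum_ite_eq' (Finset.Icc 1 d) k, if_pos hk]
    · simp [ha]
  rw [ldB_IC_eval d n θ j r hj]
  simp only [ldeq]
  rw [hsum r, hsum j]
  have houter : (if r ∈ Finset.Icc 1 n then (if r = i then θ j k else 0) else 0)
      = if r = i then θ j k else 0 := by
    by_cases hr : r = i
    · subst hr; rw [if_pos hi]
    · simp [hr]
  rw [houter]
  simp

lemma ldB_box_eq (d n i k a b : ℕ) (hi : i ∈ Finset.Icc 1 n) (hk : k ∈ Finset.Icc 1 d)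
    (c : ℝ) :
    ldB d n ((fun _ => (0:ℝ)), fun r k' => if r = i ∧ k' = k then c else 0) (ldeq a b)
      = c * (if i = a ∧ k = b then 1 else 0) := by
  rw [ldB_box_eval d n i k hi hk]
  simp [ldeq]

end LDEval
section LDMech

lemma ldbb_inl (p : ℕ × ℕ) : ldbb (Sum.inl p) = 0 := rfl
lemma ldbb_ub (p : ℕ × ℕ) : ldbb (Sum.inr (Sum.inl p)) = 1 := rfl
lemma ldbb_lb (p : ℕ × ℕ) : ldbb (Sum.inr (Sum.inr p)) = 0 := rfl

lemma ld_dot_comm (d : ℕ) (x y : ℕ → ℝ) : ∑ k ∈ Finset.Icc 1 d, y k * x k = dot d x y := by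
  unfold dot; exact Finset.sum_congr rfl fun k _ => mul_comm _ _

lemma ldB_IC_mech (d n : ℕ) (θ : ℕ → ℕ → ℝ) (q' : ℕ → ℕ → ℝ) (t' : ℕ → ℝ)
    (hq0 : ∀ k ∈ Finset.Icc 1 d, q' 0 k = 0) (ht0 : t' 0 = 0)
    (j i : ℕ) (hj : j ∈ Finset.Icc 1 n) (hi : i ∈ Finset.Icc 0 n) :
    ldB d n (ldA θ (Sum.inl (j, i))) (t', q')
      = (dot d (q' i) (θ j) - t' i) - (dot d (q' j) (θ j) - t' j) := by
  rw [ldB_IC_eval d n θ j i hj]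
  dsimp only
  by_cases hi1 : i ∈ Finset.Icc 1 n
  · rw [if_pos hi1, if_pos hi1, ld_dot_comm, ld_dot_comm]; ring
  · have hi0 : i = 0 := by
      rw [Finset.mem_Icc] at hi hi1; omega
    subst hi0
    rw [if_neg hi1, if_neg hi1, ld_dot_comm]
    have h0 : dot d (q' 0) (θ j) = 0 := by
      unfold dot
      exact Finset.sum_eq_zero fun k hk => by rw [hq0 k hk, zero_mul]
    rw [ht0, h0]; ring

lemma ld_feas_of_mech (d n : ℕ) (θ : ℕ → ℕ → ℝ) (q' : ℕ → ℕ → ℝ) (t' : ℕ → ℝ)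
    (hm : IsMechanism d n q' t') (hic : ICIR d n θ q' t') :
    ∀ row ∈ lds d n, ldB d n (ldA θ row) (t', q') ≤ ldbb row := by
  intro row hrow
  unfold lds at hrow
  rw [Finset.mem_union, Finset.mem_union] at hrow
  rcases hrow with (h | h) | h
  · rcases Finset.mem_image.mp h with ⟨p, hp, rfl⟩
    obtain ⟨j, i⟩ := p
    obtain ⟨hp1, hp2⟩ := Finset.mem_product.mp hp
    rw [ldB_IC_mech d n θ q' t' hm.1 hm.2.1 j i hp1 hp2]
    have := hic j hp1 i hp2
    rw [ldbb_inl]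
    linarith [this]
  · rcases Finset.mem_image.mp h with ⟨p, hp, rfl⟩
    obtain ⟨i, k⟩ := p
    obtain ⟨hp1, hp2⟩ := Finset.mem_product.mp hp
    have : ldA θ (Sum.inr (Sum.inl (i, k)))
        = ((fun _ => (0:ℝ)), fun r k' => if r = i ∧ k' = k then (1:ℝ) else 0) := rfl
    rw [this, ldB_box_eval d n i k hp1 hp2]
    have := (hm.2.2 i hp1 k hp2).2
    rw [ldbb_ub]
    linarith [this]
  · rcases Finset.mem_image.mp h with ⟨p, hp, rfl⟩
    obtain ⟨i, k⟩ := p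
    obtain ⟨hp1, hp2⟩ := Finset.mem_product.mp hp
    have : ldA θ (Sum.inr (Sum.inr (i, k)))
        = ((fun _ => (0:ℝ)), fun r k' => if r = i ∧ k' = k then (-1:ℝ) else 0) := rfl
    rw [this, ldB_box_eval d n i k hp1 hp2]
    have := (hm.2.2 i hp1 k hp2).1
    rw [ldbb_lb]
    linarith [this]

/-- truncation of an LP point to a mechanism -/
def ldmq (d n : ℕ) (x : (ℕ → ℝ) × (ℕ → ℕ → ℝ)) : ℕ → ℕ → ℝ :=
  fun i k => if i ∈ Finset.Icc 1 n ∧ k ∈ Finset.Icc 1 d then x.2 i k else 0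

def ldmt (n : ℕ) (x : (ℕ → ℝ) × (ℕ → ℕ → ℝ)) : ℕ → ℝ :=
  fun i => if i ∈ Finset.Icc 1 n then x.1 i else 0

lemma ldB_congr (d n : ℕ) (u z w : (ℕ → ℝ) × (ℕ → ℕ → ℝ))
    (h1 : ∀ i ∈ Finset.Icc 1 n, z.1 i = w.1 i)
    (h2 : ∀ i ∈ Finset.Icc 1 n, ∀ k ∈ Finset.Icc 1 d, z.2 i k = w.2 i k) :
    ldB d n u z = ldB d n u w := by
  unfold ldB
  congr 1
  · exact Finset.sum_congr rfl fun i hi => by rw [h1 i hi]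
  · exact Finset.sum_congr rfl fun i hi =>
      Finset.sum_congr rfl fun k hk => by rw [h2 i hi k hk]

lemma ld_mech_of_feas (d n : ℕ) (θ : ℕ → ℕ → ℝ) (x : (ℕ → ℝ) × (ℕ → ℕ → ℝ))
    (hfeas : ∀ row ∈ lds d n, ldB d n (ldA θ row) x ≤ ldbb row) :
    IsMechanism d n (ldmq d n x) (ldmt n x) ∧ ICIR d n θ (ldmq d n x) (ldmt n x) := by
  have hagree : ∀ u, ldB d n u (ldmt n x, ldmq d n x) = ldB d n u x := by
    intro u
    apply ldB_congr
    · intro i hi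
      show ldmt n x i = x.1 i
      unfold ldmt
      rw [if_pos hi]
    · intro i hi k hk
      show ldmq d n x i k = x.2 i k
      unfold ldmq
      rw [if_pos ⟨hi, hk⟩]
  have hq0 : ∀ k ∈ Finset.Icc 1 d, ldmq d n x 0 k = 0 := by
    intro k hk
    unfold ldmq
    rw [if_neg]
    rintro ⟨h0, -⟩
    simp [Finset.mem_Icc] at h0
  have ht0 : ldmt n x 0 = 0 := by
    unfold ldmt
    rw [if_neg]
    simp [Finset.mem_Icc]
  have hbox : ∀ i ∈ Finset.Icc 1 n, ∀ k ∈ Finset.Icc 1 d,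
      0 ≤ ldmq d n x i k ∧ ldmq d n x i k ≤ 1 := by
    intro i hi k hk
    have hub := hfeas (Sum.inr (Sum.inl (i, k))) (mem_lds_ub d n i k hi hk)
    have hlb := hfeas (Sum.inr (Sum.inr (i, k))) (mem_lds_lb d n i k hi hk)
    have e1 : ldA θ (Sum.inr (Sum.inl (i, k)))
        = ((fun _ => (0:ℝ)), fun r k' => if r = i ∧ k' = k then (1:ℝ) else 0) := rfl
    have e2 : ldA θ (Sum.inr (Sum.inr (i, k)))
        = ((fun _ => (0:ℝ)), fun r k' => if r = i ∧ k' = k then (-1:ℝ) else 0) := rfl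
    rw [e1, ldB_box_eval d n i k hi hk] at hub
    rw [e2, ldB_box_eval d n i k hi hk] at hlb
    rw [ldbb_ub] at hub
    rw [ldbb_lb] at hlb
    have : ldmq d n x i k = x.2 i k := by unfold ldmq; rw [if_pos ⟨hi, hk⟩]
    rw [this]
    constructor <;> nlinarith [hub, hlb]
  have hmech : IsMechanism d n (ldmq d n x) (ldmt n x) := ⟨hq0, ht0, hbox⟩
  refine ⟨hmech, ?_⟩
  intro j hj i hi
  have hIC := hfeas (Sum.inl (j, i)) (mem_lds_inl d n j i hj hi)
  rw [← hagree, ldB_IC_mech d n θ (ldmq d n x) (ldmt n x) hq0 ht0 j i hj hi] at hIC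
  rw [ldbb_inl] at hIC
  linarith [hIC]

lemma ld_rev_eval (d n : ℕ) (f : ℕ → ℝ) (x : (ℕ → ℝ) × (ℕ → ℕ → ℝ)) :
    revenue n f (ldmt n x) = ldB d n (f, fun _ _ => 0) x := by
  rw [ldB_c_eval]
  unfold revenue
  refine Finset.sum_congr rfl fun i hi => ?_
  unfold ldmt
  rw [if_pos hi]

/- product indicator sums -/
lemma ld_sum_prod_fst (s t : Finset ℕ) (v : ℕ × ℕ → ℝ) (i : ℕ) (hi : i ∈ s) :
    ∑ p ∈ s ×ˢ t, (if p.1 = i then v p else 0) = ∑ r ∈ t, v (i, r) := by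
  rw [Finset.sum_product]
  have h : ∀ j ∈ s, ∑ r ∈ t, (if (j, r).1 = i then v (j, r) else 0)
      = if j = i then ∑ r ∈ t, v (j, r) else 0 := by
    intro j _
    dsimp only
    by_cases hji : j = i
    · rw [if_pos hji]; exact Finset.sum_congr rfl fun r _ => if_pos hji
    · rw [if_neg hji]; exact Finset.sum_eq_zero fun r _ => if_neg hji
  rw [Finset.sum_congr rfl h, Finset.sum_ite_eq' s i, if_pos hi]

lemma ld_sum_prod_snd (s t : Finset ℕ) (v : ℕ × ℕ → ℝ) (i : ℕ) (hi : i ∈ t) :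
    ∑ p ∈ s ×ˢ t, (if p.2 = i then v p else 0) = ∑ j ∈ s, v (j, i) := by
  rw [Finset.sum_product]
  refine Finset.sum_congr rfl fun j _ => ?_
  have h : ∀ r ∈ t, (if (j, r).2 = i then v (j, r) else 0)
      = if r = i then v (j, r) else 0 := fun r _ => rfl
  rw [Finset.sum_congr rfl h, Finset.sum_ite_eq' t i, if_pos hi]

lemma ld_sum_prod_pair (s t : Finset ℕ) (v : ℕ × ℕ → ℝ) (i k : ℕ) (hi : i ∈ s) (hk : k ∈ t) :
    ∑ p ∈ s ×ˢ t, (if p.1 = i ∧ p.2 = k then v p else 0) = v (i, k) := by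
  have he : ∀ p : ℕ × ℕ, (if p.1 = i ∧ p.2 = k then v p else 0)
      = (if p = (i, k) then v p else 0) := by
    intro p
    by_cases h : p = (i, k)
    · subst h; simp
    · rw [if_neg h, if_neg]
      rw [Prod.ext_iff] at h
      exact fun hc => h ⟨hc.1, hc.2⟩
  rw [Finset.sum_congr rfl fun p _ => he p, Finset.sum_ite_eq' (s ×ˢ t) (i, k),
    if_pos (Finset.mem_product.mpr ⟨hi, hk⟩)]

end LDMech
section LDIdentity

lemma ld_lagrangian_identity (d n : ℕ) (θ : ℕ → ℕ → ℝ) (f : ℕ → ℝ) (hf : IsProb n f)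
    (lam : ℕ → ℕ → ℝ) (hflow : FlowConservation n f lam)
    (q' : ℕ → ℕ → ℝ) (t' : ℕ → ℝ)
    (hq0 : ∀ k ∈ Finset.Icc 1 d, q' 0 k = 0) (ht0 : t' 0 = 0) :
    revenue n f t' + ∑ j ∈ Finset.Icc 1 n, ∑ i ∈ Finset.Icc 0 n,
        lam j i * (dot d (q' j) (θ j) - t' j - dot d (q' i) (θ j) + t' i)
      = vw d n f (virt n θ f lam) q' := by
  have hdot0 : ∀ j, dot d (q' 0) (θ j) = 0 := by
    intro j
    unfold dot
    exact Finset.sum_eq_zero fun k hk => by rw [hq0 k hk, zero_mul]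
  -- Step 1: rewrite the vw side
  have hvw : vw d n f (virt n θ f lam) q'
      = ∑ i ∈ Finset.Icc 1 n, (f i * dot d (q' i) (θ i)
          - ∑ j ∈ Finset.Icc 1 n, lam j i * (dot d (q' i) (θ j) - dot d (q' i) (θ i))) := by
    unfold vw
    refine Finset.sum_congr rfl fun i hi => ?_
    have hfi : f i ≠ 0 := ne_of_gt (hf.1 i hi)
    have hv : ∀ k, f i * virt n θ f lam i k
        = f i * θ i k - ∑ j ∈ Finset.Icc 1 n, lam j i * (θ j k - θ i k) := by
      intro k
      unfold virt
      rw [mul_sub, ← mul_assoc, mul_one_div_cancel hfi, one_mul]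
    calc f i * ∑ k ∈ Finset.Icc 1 d, q' i k * virt n θ f lam i k
        = ∑ k ∈ Finset.Icc 1 d, q' i k * (f i * virt n θ f lam i k) := by
          rw [Finset.mul_sum]
          exact Finset.sum_congr rfl fun k _ => by ring
      _ = ∑ k ∈ Finset.Icc 1 d, (f i * (q' i k * θ i k)
            - ∑ j ∈ Finset.Icc 1 n, lam j i * (q' i k * θ j k - q' i k * θ i k)) := by
          refine Finset.sum_congr rfl fun k _ => ?_
          rw [hv k, mul_sub, Finset.mul_sum]
          congr 1
          · ring
          · exact Finset.sum_congr rfl fun jj _ => by ring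
      _ = f i * dot d (q' i) (θ i)
            - ∑ j ∈ Finset.Icc 1 n, lam j i * (dot d (q' i) (θ j) - dot d (q' i) (θ i)) := by
          rw [Finset.sum_sub_distrib]
          congr 1
          · unfold dot
            rw [Finset.mul_sum]
          · rw [Finset.sum_comm]
            refine Finset.sum_congr rfl fun j _ => ?_
            unfold dot
            rw [mul_sub, Finset.mul_sum, Finset.mul_sum, ← Finset.sum_sub_distrib]
            exact Finset.sum_congr rfl fun k _ => by ring
  -- Step 2: rewrite the Lagrangian penalty sum
  have hL : ∑ j ∈ Finset.Icc 1 n, ∑ i ∈ Finset.Icc 0 n,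
        lam j i * (dot d (q' j) (θ j) - t' j - dot d (q' i) (θ j) + t' i)
      = ∑ j ∈ Finset.Icc 1 n, ((∑ i ∈ Finset.Icc 0 n, lam j i) * (dot d (q' j) (θ j) - t' j)
          - ∑ i ∈ Finset.Icc 1 n, lam j i * (dot d (q' i) (θ j) - t' i)) := by
    refine Finset.sum_congr rfl fun j hj => ?_
    have h0 : ∑ i ∈ Finset.Icc 0 n,
        lam j i * (dot d (q' j) (θ j) - t' j - dot d (q' i) (θ j) + t' i)
        = ∑ i ∈ Finset.Icc 0 n, (lam j i * (dot d (q' j) (θ j) - t' j)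
            - lam j i * (dot d (q' i) (θ j) - t' i)) :=
      Finset.sum_congr rfl fun i _ => by ring
    rw [h0, Finset.sum_sub_distrib, ← Finset.sum_mul]
    congr 1
    rw [ld_Icc_zero n, Finset.sum_insert (by simp)]
    rw [hdot0 j, ht0]
    simp
  rw [hvw, hL]
  unfold revenue
  rw [← Finset.sum_add_distrib]
  have h1 : ∑ j ∈ Finset.Icc 1 n, (f j * t' j
      + ((∑ i ∈ Finset.Icc 0 n, lam j i) * (dot d (q' j) (θ j) - t' j)
          - ∑ i ∈ Finset.Icc 1 n, lam j i * (dot d (q' i) (θ j) - t' i)))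
      = ∑ j ∈ Finset.Icc 1 n, ((f j * t' j
          + (∑ i ∈ Finset.Icc 0 n, lam j i) * (dot d (q' j) (θ j) - t' j))
          - ∑ i ∈ Finset.Icc 1 n, lam j i * (dot d (q' i) (θ j) - t' i)) :=
    Finset.sum_congr rfl fun j _ => by ring
  rw [h1, Finset.sum_sub_distrib,
    Finset.sum_comm (f := fun j i => lam j i * (dot d (q' i) (θ j) - t' i)),
    ← Finset.sum_sub_distrib]
  refine Finset.sum_congr rfl fun i hi => ?_
  have e : ∑ j ∈ Finset.Icc 1 n, lam j i * (dot d (q' i) (θ j) - t' i)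
      = ∑ j ∈ Finset.Icc 1 n, lam j i * (dot d (q' i) (θ j) - dot d (q' i) (θ i))
        + (∑ j ∈ Finset.Icc 1 n, lam j i) * (dot d (q' i) (θ i) - t' i) := by
    rw [Finset.sum_mul, ← Finset.sum_add_distrib]
    exact Finset.sum_congr rfl fun j _ => by ring
  rw [e, hflow i hi]
  ring

end LDIdentity
section LDMax

lemma ld_vwmax (d n : ℕ) (θ : ℕ → ℕ → ℝ) (f : ℕ → ℝ)
    (q : ℕ → ℕ → ℝ) (hq : InUnitCube d n q)
    (lam μ ν : ℕ → ℕ → ℝ)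
    (hμ0 : ∀ i k, 0 ≤ μ i k) (hν0 : ∀ i k, 0 ≤ ν i k)
    (hkey : ∀ i ∈ Finset.Icc 1 n, ∀ k ∈ Finset.Icc 1 d,
      f i * virt n θ f lam i k = μ i k - ν i k)
    (hμcs : ∀ i ∈ Finset.Icc 1 n, ∀ k ∈ Finset.Icc 1 d, μ i k * (1 - q i k) = 0)
    (hνcs : ∀ i ∈ Finset.Icc 1 n, ∀ k ∈ Finset.Icc 1 d, ν i k * q i k = 0) :
    ∀ q' : ℕ → ℕ → ℝ, InUnitCube d n q' →
      vw d n f (virt n θ f lam) q' ≤ vw d n f (virt n θ f lam) q := by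
  intro q' hq'
  unfold vw
  have conv : ∀ p : ℕ → ℕ → ℝ, ∀ i, f i * ∑ k ∈ Finset.Icc 1 d, p i k * virt n θ f lam i k
      = ∑ k ∈ Finset.Icc 1 d, p i k * (f i * virt n θ f lam i k) := by
    intro p i
    rw [Finset.mul_sum]
    exact Finset.sum_congr rfl fun k _ => by ring
  refine Finset.sum_le_sum fun i hi => ?_
  rw [conv q' i, conv q i]
  refine Finset.sum_le_sum fun k hk => ?_
  rw [hkey i hi k hk]
  obtain ⟨h0', h1'⟩ := hq' i hi k hk
  obtain ⟨h0, h1⟩ := hq i hi k hk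
  have hμcs' := hμcs i hi k hk
  have hνcs' := hνcs i hi k hk
  have hμn := hμ0 i k
  have hνn := hν0 i k
  nlinarith [mul_nonneg (sub_nonneg.mpr h1') hμn, mul_nonneg h0' hνn]

end LDMax
/-- **Lemma 1 (Lagrangian duality characterization of optimal mechanisms).**
An IC-IR mechanism `(q,t)` is optimal iff there exist multipliers `λ_{ji}` that are
nonnegative, conserve flow, make the allocation `q` maximize virtual welfare, and
satisfy complementary slackness. -/
theorem lagrangian_duality
    (d n : ℕ) (hd : 1 ≤ d) (hn : 1 ≤ n)
    (θ : ℕ → ℕ → ℝ) (hθ : ∀ i ∈ Finset.Icc 1 n, ∀ k ∈ Finset.Icc 1 d, 0 ≤ θ i k)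
    (f : ℕ → ℝ) (hf : IsProb n f)
    (q : ℕ → ℕ → ℝ) (t : ℕ → ℝ)
    (hmech : IsMechanism d n q t) (hic : ICIR d n θ q t) :
    Optimal d n θ f q t ↔
      ∃ lam : ℕ → ℕ → ℝ,
        NonnegLam n lam ∧
        FlowConservation n f lam ∧
        (∀ q' : ℕ → ℕ → ℝ, InUnitCube d n q' →
          vw d n f (virt n θ f lam) q' ≤ vw d n f (virt n θ f lam) q) ∧
        (∀ j ∈ Finset.Icc 1 n, ∀ i ∈ Finset.Icc 0 n,
          lam j i * (dot d (q j) (θ j) - t j - dot d (q i) (θ j) + t i) = 0) := by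
  classical
  constructor
  · -- forward direction: optimality gives multipliers via LP duality (KKT)
    intro hopt
    obtain ⟨y, hy, hstat, hcs⟩ := my_kkt (ldB d n) (ldB_nonneg d n) (ldB_ker d n)
      (ldB_addl d n) (ldB_addr d n) (lds d n) (ldA θ) ldbb (f, fun _ _ => 0) (t, q)
      (ld_feas_of_mech d n θ q t hmech hic)
      (fun x hx => by
        obtain ⟨hm', hic'⟩ := ld_mech_of_feas d n θ x hx
        have h1 : ldB d n (f, fun _ _ => 0) x = revenue n f (ldmt n x) :=
          (ld_rev_eval d n f x).symm
        have h2 : ldB d n (f, fun _ _ => 0) (t, q) = revenue n f t := by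
          rw [ldB_c_eval]; rfl
        rw [h1, h2]
        exact hopt.2.2 _ _ hm' hic')
    -- flow conservation in terms of y
    have hflowy : ∀ i ∈ Finset.Icc 1 n,
        f i = ∑ r ∈ Finset.Icc 0 n, y (Sum.inl (i, r))
            - ∑ j ∈ Finset.Icc 1 n, y (Sum.inl (j, i)) := by
      intro i hi
      have hst := hstat (ldet i)
      rw [ldB_c_eval] at hst
      have hlhs : ∑ r ∈ Finset.Icc 1 n, f r * (ldet i).1 r = f i := by
        simp only [ldet, mul_ite, mul_one, mul_zero]
        rw [Finset.sum_ite_eq' (Finset.Icc 1 n) i, if_pos hi]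
      rw [hlhs, lds_sum] at hst
      have hub0 : ∑ p ∈ Finset.Icc 1 n ×ˢ Finset.Icc 1 d,
          y (Sum.inr (Sum.inl p)) * ldB d n (ldA θ (Sum.inr (Sum.inl p))) (ldet i) = 0 := by
        refine Finset.sum_eq_zero fun p hp => ?_
        obtain ⟨a, b⟩ := p
        obtain ⟨ha, hb⟩ := Finset.mem_product.mp hp
        have e : ldA θ (Sum.inr (Sum.inl (a, b)))
            = ((fun _ => (0:ℝ)), fun r k' => if r = a ∧ k' = b then (1:ℝ) else 0) := rfl
        rw [e, ldB_box_et d n a b i ha hb 1, mul_zero]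
      have hlb0 : ∑ p ∈ Finset.Icc 1 n ×ˢ Finset.Icc 1 d,
          y (Sum.inr (Sum.inr p)) * ldB d n (ldA θ (Sum.inr (Sum.inr p))) (ldet i) = 0 := by
        refine Finset.sum_eq_zero fun p hp => ?_
        obtain ⟨a, b⟩ := p
        obtain ⟨ha, hb⟩ := Finset.mem_product.mp hp
        have e : ldA θ (Sum.inr (Sum.inr (a, b)))
            = ((fun _ => (0:ℝ)), fun r k' => if r = a ∧ k' = b then (-1:ℝ) else 0) := rfl
        rw [e, ldB_box_et d n a b i ha hb (-1), mul_zero]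
      have hics : ∑ p ∈ Finset.Icc 1 n ×ˢ Finset.Icc 0 n,
          y (Sum.inl p) * ldB d n (ldA θ (Sum.inl p)) (ldet i)
          = ∑ r ∈ Finset.Icc 0 n, y (Sum.inl (i, r))
            - ∑ j ∈ Finset.Icc 1 n, y (Sum.inl (j, i)) := by
        have h : ∀ p ∈ Finset.Icc 1 n ×ˢ Finset.Icc 0 n,
            y (Sum.inl p) * ldB d n (ldA θ (Sum.inl p)) (ldet i)
            = (if p.1 = i then y (Sum.inl p) else 0)
              - (if p.2 = i then y (Sum.inl p) else 0) := by
          rintro ⟨j, r⟩ hp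
          obtain ⟨hj, hr⟩ := Finset.mem_product.mp hp
          rw [ldB_IC_et d n θ j r i hj hi]
          dsimp only
          split_ifs <;> ring
        rw [Finset.sum_congr rfl h, Finset.sum_sub_distrib,
          ld_sum_prod_fst _ _ _ i hi,
          ld_sum_prod_snd _ _ _ i (by rw [Finset.mem_Icc] at hi ⊢; omega)]
      rw [hub0, hlb0, hics] at hst
      linarith [hst]
    -- q-stationarity in terms of y
    have hq_eq : ∀ i ∈ Finset.Icc 1 n, ∀ k ∈ Finset.Icc 1 d,
        (0:ℝ) = (∑ j ∈ Finset.Icc 1 n, y (Sum.inl (j, i)) * θ j k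
            - ∑ r ∈ Finset.Icc 0 n, y (Sum.inl (i, r)) * θ i k)
          + y (Sum.inr (Sum.inl (i, k))) - y (Sum.inr (Sum.inr (i, k))) := by
      intro i hi k hk
      have hst := hstat (ldeq i k)
      rw [ldB_c_eval] at hst
      have hlhs : ∑ r ∈ Finset.Icc 1 n, f r * (ldeq i k).1 r = 0 := by
        simp [ldeq]
      rw [hlhs, lds_sum] at hst
      have hics : ∑ p ∈ Finset.Icc 1 n ×ˢ Finset.Icc 0 n,
          y (Sum.inl p) * ldB d n (ldA θ (Sum.inl p)) (ldeq i k)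
          = ∑ j ∈ Finset.Icc 1 n, y (Sum.inl (j, i)) * θ j k
            - ∑ r ∈ Finset.Icc 0 n, y (Sum.inl (i, r)) * θ i k := by
        have h : ∀ p ∈ Finset.Icc 1 n ×ˢ Finset.Icc 0 n,
            y (Sum.inl p) * ldB d n (ldA θ (Sum.inl p)) (ldeq i k)
            = (if p.2 = i then y (Sum.inl p) * θ p.1 k else 0)
              - (if p.1 = i then y (Sum.inl p) * θ p.1 k else 0) := by
          rintro ⟨j, r⟩ hp
          obtain ⟨hj, hr⟩ := Finset.mem_product.mp hp
          rw [ldB_IC_eq d n θ j r i k hj hi hk]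
          dsimp only
          split_ifs <;> ring
        rw [Finset.sum_congr rfl h, Finset.sum_sub_distrib,
          ld_sum_prod_snd _ _ _ i (show i ∈ Finset.Icc 0 n by
            rw [Finset.mem_Icc] at hi ⊢; omega),
          ld_sum_prod_fst _ _ _ i hi]
      have hubs : ∑ p ∈ Finset.Icc 1 n ×ˢ Finset.Icc 1 d,
          y (Sum.inr (Sum.inl p)) * ldB d n (ldA θ (Sum.inr (Sum.inl p))) (ldeq i k)
          = y (Sum.inr (Sum.inl (i, k))) := by
        have h : ∀ p ∈ Finset.Icc 1 n ×ˢ Finset.Icc 1 d,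
            y (Sum.inr (Sum.inl p)) * ldB d n (ldA θ (Sum.inr (Sum.inl p))) (ldeq i k)
            = (if p.1 = i ∧ p.2 = k then y (Sum.inr (Sum.inl p)) else 0) := by
          rintro ⟨a, b⟩ hp
          obtain ⟨ha, hb⟩ := Finset.mem_product.mp hp
          have e : ldA θ (Sum.inr (Sum.inl (a, b)))
              = ((fun _ => (0:ℝ)), fun r k' => if r = a ∧ k' = b then (1:ℝ) else 0) := rfl
          rw [e, ldB_box_eq d n a b i k ha hb 1]
          dsimp only
          split_ifs <;> ring
        rw [Finset.sum_congr rfl h, ld_sum_prod_pair _ _ _ i k hi hk]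
      have hlbs : ∑ p ∈ Finset.Icc 1 n ×ˢ Finset.Icc 1 d,
          y (Sum.inr (Sum.inr p)) * ldB d n (ldA θ (Sum.inr (Sum.inr p))) (ldeq i k)
          = -y (Sum.inr (Sum.inr (i, k))) := by
        have h : ∀ p ∈ Finset.Icc 1 n ×ˢ Finset.Icc 1 d,
            y (Sum.inr (Sum.inr p)) * ldB d n (ldA θ (Sum.inr (Sum.inr p))) (ldeq i k)
            = (if p.1 = i ∧ p.2 = k then -y (Sum.inr (Sum.inr p)) else 0) := by
          rintro ⟨a, b⟩ hp
          obtain ⟨ha, hb⟩ := Finset.mem_product.mp hp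
          have e : ldA θ (Sum.inr (Sum.inr (a, b)))
              = ((fun _ => (0:ℝ)), fun r k' => if r = a ∧ k' = b then (-1:ℝ) else 0) := rfl
          rw [e, ldB_box_eq d n a b i k ha hb (-1)]
          dsimp only
          split_ifs <;> ring
        rw [Finset.sum_congr rfl h, ld_sum_prod_pair _ _ _ i k hi hk]
      rw [hics, hubs, hlbs] at hst
      linarith [hst]
    -- key: f i * φ_i^k = μ_ik − ν_ik
    have hkeyy : ∀ i ∈ Finset.Icc 1 n, ∀ k ∈ Finset.Icc 1 d,
        f i * virt n θ f (fun j i => y (Sum.inl (j, i))) i k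
          = y (Sum.inr (Sum.inl (i, k))) - y (Sum.inr (Sum.inr (i, k))) := by
      intro i hi k hk
      have hfi : f i ≠ 0 := ne_of_gt (hf.1 i hi)
      have hv : f i * virt n θ f (fun j i => y (Sum.inl (j, i))) i k
          = f i * θ i k - ∑ j ∈ Finset.Icc 1 n, y (Sum.inl (j, i)) * (θ j k - θ i k) := by
        simp only [virt]
        rw [mul_sub, ← mul_assoc, mul_one_div_cancel hfi, one_mul]
      have e1 : ∑ j ∈ Finset.Icc 1 n, y (Sum.inl (j, i)) * (θ j k - θ i k)
          = ∑ j ∈ Finset.Icc 1 n, y (Sum.inl (j, i)) * θ j k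
            - (∑ j ∈ Finset.Icc 1 n, y (Sum.inl (j, i))) * θ i k := by
        rw [Finset.sum_mul, ← Finset.sum_sub_distrib]
        exact Finset.sum_congr rfl fun j _ => by ring
      have e2 : ∑ r ∈ Finset.Icc 0 n, y (Sum.inl (i, r)) * θ i k
          = (∑ r ∈ Finset.Icc 0 n, y (Sum.inl (i, r))) * θ i k := (Finset.sum_mul _ _ _).symm
      have hfl' : f i * θ i k
          = (∑ r ∈ Finset.Icc 0 n, y (Sum.inl (i, r))) * θ i k
            - (∑ j ∈ Finset.Icc 1 n, y (Sum.inl (j, i))) * θ i k := by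
        rw [hflowy i hi]; ring
      have hq := hq_eq i hi k hk
      linarith [hv, e1, e2, hfl', hq]
    refine ⟨fun j i => y (Sum.inl (j, i)), ?_, ?_, ?_, ?_⟩
    · intro j _ i _
      exact hy _
    · intro i hi
      exact hflowy i hi
    · refine ld_vwmax d n θ f q hmech.2.2
        (fun j i => y (Sum.inl (j, i)))
        (fun i k => y (Sum.inr (Sum.inl (i, k))))
        (fun i k => y (Sum.inr (Sum.inr (i, k))))
        (fun i k => hy _) (fun i k => hy _) hkeyy ?_ ?_
      · intro i hi k hk
        have hcs' := hcs (Sum.inr (Sum.inl (i, k))) (mem_lds_ub d n i k hi hk)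
        have e : ldA θ (Sum.inr (Sum.inl (i, k)))
            = ((fun _ => (0:ℝ)), fun r k' => if r = i ∧ k' = k then (1:ℝ) else 0) := rfl
        rw [ldbb_ub, e, ldB_box_eval d n i k hi hk] at hcs'
        have : (t, q).2 i k = q i k := rfl
        rw [this] at hcs'
        linear_combination hcs'
      · intro i hi k hk
        have hcs' := hcs (Sum.inr (Sum.inr (i, k))) (mem_lds_lb d n i k hi hk)
        have e : ldA θ (Sum.inr (Sum.inr (i, k)))
            = ((fun _ => (0:ℝ)), fun r k' => if r = i ∧ k' = k then (-1:ℝ) else 0) := rfl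
        rw [ldbb_lb, e, ldB_box_eval d n i k hi hk] at hcs'
        have : (t, q).2 i k = q i k := rfl
        rw [this] at hcs'
        linear_combination hcs'
    · intro j hj i hi
      have hcs' := hcs (Sum.inl (j, i)) (mem_lds_inl d n j i hj hi)
      rw [ldbb_inl, ldB_IC_mech d n θ q t hmech.1 hmech.2.1 j i hj hi] at hcs'
      linear_combination hcs'
  · -- backward direction: weak duality
    rintro ⟨lam, hnn, hflow, hmax, hcsl⟩
    refine ⟨hmech, hic, ?_⟩
    intro q'' t'' hm'' hic''
    have hid' := ld_lagrangian_identity d n θ f hf lam hflow q'' t'' hm''.1 hm''.2.1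
    have hid := ld_lagrangian_identity d n θ f hf lam hflow q t hmech.1 hmech.2.1
    have hpen' : 0 ≤ ∑ j ∈ Finset.Icc 1 n, ∑ i ∈ Finset.Icc 0 n,
        lam j i * (dot d (q'' j) (θ j) - t'' j - dot d (q'' i) (θ j) + t'' i) := by
      refine Finset.sum_nonneg fun j hj => Finset.sum_nonneg fun i hi => ?_
      refine mul_nonneg (hnn j hj i hi) ?_
      have := hic'' j hj i hi
      linarith
    have hpen : ∑ j ∈ Finset.Icc 1 n, ∑ i ∈ Finset.Icc 0 n,
        lam j i * (dot d (q j) (θ j) - t j - dot d (q i) (θ j) + t i) = 0 :=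
      Finset.sum_eq_zero fun j hj => Finset.sum_eq_zero fun i hi => hcsl j hj i hi
    have hle : vw d n f (virt n θ f lam) q'' ≤ vw d n f (virt n θ f lam) q :=
      hmax q'' hm''.2.2
    linarith [hid, hid', hpen, hpen', hle]
end
end

section
/- Weak duality bound: For every IC-IR mechanism (q,t) and every flow λ (i.e., λ_ji ≥ 0 for all j ∈ {1,…,n}, i ∈ {0,1,…,n}, and f_i = Σ_{j=0}^n λ_ij − Σ_{j=1}^n λ_ji for all i ∈ {1,…,n}), the revenue satisfies Σ_{i=1}^n f_i t_i ≤ Σ_{i=1}^n f_i Σ_{k=1}^d max(φ_i^{λ,k}, 0). -/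
open Finset

noncomputable section

/-- **Weak duality bound**: for every IC-IR mechanism and every nonnegative flow `λ`,
revenue is at most `∑_i f_i ∑_k max(φ_i^{λ,k}, 0)`. -/
theorem weak_duality
    (d n : ℕ) (hd : 1 ≤ d) (hn : 1 ≤ n)
    (θ : ℕ → ℕ → ℝ) (hθ : ∀ i ∈ Finset.Icc 1 n, ∀ k ∈ Finset.Icc 1 d, 0 ≤ θ i k)
    (f : ℕ → ℝ) (hf : IsProb n f)
    (q : ℕ → ℕ → ℝ) (t : ℕ → ℝ)
    (hmech : IsMechanism d n q t) (hic : ICIR d n θ q t)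
    (lam : ℕ → ℕ → ℝ) (hnn : NonnegLam n lam) (hflow : FlowConservation n f lam) :
    revenue n f t ≤
      ∑ i ∈ Finset.Icc 1 n, f i * ∑ k ∈ Finset.Icc 1 d, max (virt n θ f lam i k) 0 := by
  obtain ⟨hq0, ht0, hq01⟩ := hmech
  obtain ⟨hfpos, hfsum⟩ := hf
  have hI0 : Finset.Icc 0 n = insert 0 (Finset.Icc 1 n) := by
    ext x; simp; omega
  have h0I : (0:ℕ) ∉ Finset.Icc 1 n := by simp
  have hD0 : ∀ j, dot d (q 0) (θ j) = 0 := by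
    intro j; unfold dot; apply Finset.sum_eq_zero
    intro k hk; rw [hq0 k hk]; ring
  have hflow' : ∀ j ∈ Finset.Icc 1 n,
      ∑ i ∈ Finset.Icc 0 n, lam j i = f j + ∑ i ∈ Finset.Icc 1 n, lam i j := by
    intro j hj; have := hflow j hj; linarith
  -- Step 1: revenue equals the double sum of payment differences
  have step1 : revenue n f t
      = ∑ j ∈ Finset.Icc 1 n, ∑ i ∈ Finset.Icc 0 n, lam j i * (t j - t i) := by
    have h1 : ∀ j ∈ Finset.Icc 1 n,
        ∑ i ∈ Finset.Icc 0 n, lam j i * (t j - t i)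
          = f j * t j + ((∑ i ∈ Finset.Icc 1 n, lam i j) * t j
            - ∑ i ∈ Finset.Icc 1 n, lam j i * t i) := by
      intro j hj
      have e1 : ∑ i ∈ Finset.Icc 0 n, lam j i * (t j - t i)
          = (∑ i ∈ Finset.Icc 0 n, lam j i) * t j
            - ∑ i ∈ Finset.Icc 0 n, lam j i * t i := by
        rw [Finset.sum_mul, ← Finset.sum_sub_distrib]
        exact Finset.sum_congr rfl fun i _ => by ring
      have e2 : ∑ i ∈ Finset.Icc 0 n, lam j i * t i
          = ∑ i ∈ Finset.Icc 1 n, lam j i * t i := by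
        rw [hI0, Finset.sum_insert h0I, ht0]; ring
      rw [e1, e2, hflow' j hj]; ring
    rw [Finset.sum_congr rfl h1, Finset.sum_add_distrib, Finset.sum_sub_distrib]
    have swap : ∑ j ∈ Finset.Icc 1 n, (∑ i ∈ Finset.Icc 1 n, lam i j) * t j
        = ∑ j ∈ Finset.Icc 1 n, ∑ i ∈ Finset.Icc 1 n, lam j i * t i := by
      simp_rw [Finset.sum_mul]
      exact Finset.sum_comm
    rw [swap]
    unfold revenue; ring
  -- Step 2: bound each payment difference by IC
  have step2 : ∑ j ∈ Finset.Icc 1 n, ∑ i ∈ Finset.Icc 0 n, lam j i * (t j - t i)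
      ≤ ∑ j ∈ Finset.Icc 1 n, ∑ i ∈ Finset.Icc 0 n,
          lam j i * (dot d (q j) (θ j) - dot d (q i) (θ j)) := by
    apply Finset.sum_le_sum; intro j hj
    apply Finset.sum_le_sum; intro i hi
    have hic' := hic j hj i hi
    have hnn' := hnn j hj i hi
    nlinarith [hic', hnn']
  -- Step 3: rewrite the bound as virtual welfare
  have step3 : ∑ j ∈ Finset.Icc 1 n, ∑ i ∈ Finset.Icc 0 n,
        lam j i * (dot d (q j) (θ j) - dot d (q i) (θ j))
      = ∑ i ∈ Finset.Icc 1 n, f i * ∑ k ∈ Finset.Icc 1 d, q i k * virt n θ f lam i k := by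
    have h1 : ∀ j ∈ Finset.Icc 1 n,
        ∑ i ∈ Finset.Icc 0 n, lam j i * (dot d (q j) (θ j) - dot d (q i) (θ j))
          = f j * dot d (q j) (θ j)
            + ((∑ i ∈ Finset.Icc 1 n, lam i j) * dot d (q j) (θ j)
              - ∑ i ∈ Finset.Icc 1 n, lam j i * dot d (q i) (θ j)) := by
      intro j hj
      have e1 : ∑ i ∈ Finset.Icc 0 n, lam j i * (dot d (q j) (θ j) - dot d (q i) (θ j))
          = (∑ i ∈ Finset.Icc 0 n, lam j i) * dot d (q j) (θ j)
            - ∑ i ∈ Finset.Icc 0 n, lam j i * dot d (q i) (θ j) := by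
        rw [Finset.sum_mul, ← Finset.sum_sub_distrib]
        exact Finset.sum_congr rfl fun i _ => by ring
      have e2 : ∑ i ∈ Finset.Icc 0 n, lam j i * dot d (q i) (θ j)
          = ∑ i ∈ Finset.Icc 1 n, lam j i * dot d (q i) (θ j) := by
        rw [hI0, Finset.sum_insert h0I, hD0]; ring
      rw [e1, e2, hflow' j hj]; ring
    have h2 : ∀ i ∈ Finset.Icc 1 n,
        f i * ∑ k ∈ Finset.Icc 1 d, q i k * virt n θ f lam i k
          = f i * dot d (q i) (θ i)
            - ∑ j ∈ Finset.Icc 1 n, lam j i * (dot d (q i) (θ j) - dot d (q i) (θ i)) := by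
      intro i hi
      have hfne : f i ≠ 0 := ne_of_gt (hfpos i hi)
      have hswap : ∑ k ∈ Finset.Icc 1 d,
            q i k * ∑ j ∈ Finset.Icc 1 n, lam j i * (θ j k - θ i k)
          = ∑ j ∈ Finset.Icc 1 n, lam j i * (dot d (q i) (θ j) - dot d (q i) (θ i)) := by
        simp_rw [Finset.mul_sum]
        rw [Finset.sum_comm]
        apply Finset.sum_congr rfl
        intro j _
        unfold dot
        rw [← Finset.sum_sub_distrib, Finset.mul_sum]
        apply Finset.sum_congr rfl; intro k _; ring
      have e : ∑ k ∈ Finset.Icc 1 d, q i k * virt n θ f lam i k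
          = dot d (q i) (θ i) - (1 / f i)
              * ∑ j ∈ Finset.Icc 1 n, lam j i * (dot d (q i) (θ j) - dot d (q i) (θ i)) := by
        rw [← hswap]
        unfold virt dot
        rw [Finset.mul_sum, ← Finset.sum_sub_distrib]
        apply Finset.sum_congr rfl; intro k _; ring
      rw [e]; field_simp
    rw [Finset.sum_congr rfl h1, Finset.sum_congr rfl h2, Finset.sum_add_distrib,
      Finset.sum_sub_distrib, Finset.sum_sub_distrib]
    have swap1 : ∑ j ∈ Finset.Icc 1 n, (∑ i ∈ Finset.Icc 1 n, lam i j) * dot d (q j) (θ j)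
        = ∑ j ∈ Finset.Icc 1 n, ∑ i ∈ Finset.Icc 1 n, lam j i * dot d (q i) (θ i) := by
      simp_rw [Finset.sum_mul]
      exact Finset.sum_comm
    have swap2 : ∑ j ∈ Finset.Icc 1 n, ∑ i ∈ Finset.Icc 1 n,
          lam j i * (dot d (q i) (θ j) - dot d (q i) (θ i))
        = ∑ i ∈ Finset.Icc 1 n, ∑ j ∈ Finset.Icc 1 n,
          lam j i * (dot d (q i) (θ j) - dot d (q i) (θ i)) := Finset.sum_comm
    have expand : ∑ j ∈ Finset.Icc 1 n, ∑ i ∈ Finset.Icc 1 n,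
          lam j i * (dot d (q i) (θ j) - dot d (q i) (θ i))
        = ∑ j ∈ Finset.Icc 1 n, (∑ i ∈ Finset.Icc 1 n, lam j i * dot d (q i) (θ j)
            - ∑ i ∈ Finset.Icc 1 n, lam j i * dot d (q i) (θ i)) := by
      apply Finset.sum_congr rfl; intro j _
      rw [← Finset.sum_sub_distrib]
      exact Finset.sum_congr rfl fun i _ => by ring
    rw [← swap2, expand, Finset.sum_sub_distrib, swap1]
    ring
  -- Step 4: virtual welfare is at most the positive part bound
  have step4 : ∑ i ∈ Finset.Icc 1 n, f i * ∑ k ∈ Finset.Icc 1 d, q i k * virt n θ f lam i k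
      ≤ ∑ i ∈ Finset.Icc 1 n, f i * ∑ k ∈ Finset.Icc 1 d, max (virt n θ f lam i k) 0 := by
    apply Finset.sum_le_sum; intro i hi
    apply mul_le_mul_of_nonneg_left _ (le_of_lt (hfpos i hi))
    apply Finset.sum_le_sum; intro k hk
    obtain ⟨hq0k, hq1k⟩ := hq01 i hi k hk
    rcases le_or_gt 0 (virt n θ f lam i k) with h | h
    · calc q i k * virt n θ f lam i k ≤ 1 * virt n θ f lam i k := by nlinarith
        _ = virt n θ f lam i k := one_mul _
        _ ≤ max (virt n θ f lam i k) 0 := le_max_left _ _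
    · calc q i k * virt n θ f lam i k ≤ 0 := by nlinarith
        _ ≤ max (virt n θ f lam i k) 0 := le_max_right _ _
  calc revenue n f t
      = ∑ j ∈ Finset.Icc 1 n, ∑ i ∈ Finset.Icc 0 n, lam j i * (t j - t i) := step1
    _ ≤ ∑ j ∈ Finset.Icc 1 n, ∑ i ∈ Finset.Icc 0 n,
          lam j i * (dot d (q j) (θ j) - dot d (q i) (θ j)) := step2
    _ = ∑ i ∈ Finset.Icc 1 n, f i * ∑ k ∈ Finset.Icc 1 d, q i k * virt n θ f lam i k := step3
    _ ≤ _ := step4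
end
end

section
/- Theorem 1 (optimality of upgrade pricing for regular distributions): Suppose the instance is weakly monotone and regular with respect to the same cutoffs i^1, …, i^d ∈ {1,…,n}. Then there exist transfers t_1, …, t_n ∈ ℝ such that the mechanism (q,t) with allocation q_i^k = 1 if i ≥ i^k and q_i^k = 0 otherwise (and (q_0,t_0) = (0,0)) is IC-IR and optimal; moreover this mechanism is an upgrade pricing mechanism. -/
open Finset

noncomputable section

/-! ### Auxiliary lemmas for Theorem 1 -/

lemma aux_sum_tail (n : ℕ) (f : ℕ → ℝ) (hf : IsProb n f) (m : ℕ) (hm : m ≤ n) :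
    ∑ i ∈ Finset.Icc (m + 1) n, f i = 1 - Fc f m := by
  have h1 : ((∑ i ∈ Finset.Ioc 0 m, f i) + ∑ i ∈ Finset.Ioc m n, f i)
      = ∑ i ∈ Finset.Ioc 0 n, f i := Finset.sum_Ioc_consecutive f (Nat.zero_le m) hm
  have e1 : Finset.Icc (m + 1) n = Finset.Ioc m n := by
    ext x; simp only [Finset.mem_Icc, Finset.mem_Ioc]; omega
  have e2 : Finset.Icc 1 m = Finset.Ioc 0 m := by
    ext x; simp only [Finset.mem_Icc, Finset.mem_Ioc]; omega
  have e3 : Finset.Icc 1 n = Finset.Ioc 0 n := by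
    ext x; simp only [Finset.mem_Icc, Finset.mem_Ioc]; omega
  have h2 : Fc f m = ∑ i ∈ Finset.Ioc 0 m, f i := by rw [Fc, e2]
  have h3 : (∑ i ∈ Finset.Ioc 0 n, f i) = 1 := by rw [← e3]; exact hf.2
  rw [e1]; linarith

lemma aux_f_virt (n : ℕ) (θ : ℕ → ℕ → ℝ) (f : ℕ → ℝ) (hf : IsProb n f)
    (i : ℕ) (hi : i ∈ Finset.Icc 1 n) (k : ℕ) :
    f i * initVirt n θ f i k
      = f i * θ i k - (1 - Fc f i) * (θ (i + 1) k - θ i k) := by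
  have hfi : f i ≠ 0 := ne_of_gt (hf.1 i hi)
  rw [Finset.mem_Icc] at hi
  rw [initVirt]
  by_cases h : i < n
  · rw [if_pos h]; field_simp
  · rw [if_neg h]
    have hin : i = n := by omega
    have hF : Fc f i = 1 := by rw [hin, Fc]; exact hf.2
    rw [hF]; ring

lemma aux_telescope (n : ℕ) (θ : ℕ → ℕ → ℝ) (f : ℕ → ℝ) (hf : IsProb n f) (k : ℕ) :
    ∀ j c, n - c = j → 1 ≤ c → c ≤ n →
      (∑ i ∈ Finset.Icc c n, f i * initVirt n θ f i k)
        = (∑ i ∈ Finset.Icc c n, f i) * θ c k := by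
  intro j
  induction j with
  | zero =>
    intro c hc h1 h2
    have hcn : c = n := by omega
    rw [hcn, Finset.Icc_self, Finset.sum_singleton, Finset.sum_singleton,
      initVirt, if_neg (lt_irrefl n)]
  | succ j ih =>
    intro c hc h1 h2
    have hcn : c < n := by omega
    have hins : Finset.Icc c n = insert c (Finset.Icc (c + 1) n) := by
      ext x; simp only [Finset.mem_Icc, Finset.mem_insert]; omega
    have hnotmem : c ∉ Finset.Icc (c + 1) n := by
      simp only [Finset.mem_Icc]; omega
    have ihc := ih (c + 1) (by omega) (by omega) (by omega)
    have hT : (∑ i ∈ Finset.Icc (c + 1) n, f i) = 1 - Fc f c :=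
      aux_sum_tail n f hf c (le_of_lt hcn)
    have hfv := aux_f_virt n θ f hf c (Finset.mem_Icc.mpr ⟨h1, h2⟩) k
    rw [hins, Finset.sum_insert hnotmem, Finset.sum_insert hnotmem, ihc, hT]
    linear_combination hfv

lemma aux_rev_le_vw (d n : ℕ) (θ : ℕ → ℕ → ℝ) (f : ℕ → ℝ) (hf : IsProb n f)
    (q' : ℕ → ℕ → ℝ) (t' : ℕ → ℝ)
    (hm : IsMechanism d n q' t') (hic : ICIR d n θ q' t') :
    revenue n f t' ≤ vw d n f (initVirt n θ f) q' := by
  set D : ℕ → ℝ := fun m => dot d (q' m) (θ (m + 1)) - dot d (q' m) (θ m) with hD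
  have hu : ∀ i, 1 ≤ i → i ≤ n →
      (∑ m ∈ Finset.Icc 1 (i - 1), D m) ≤ dot d (q' i) (θ i) - t' i := by
    intro i
    induction i with
    | zero => intro h; omega
    | succ m ihm =>
      intro _ h2
      by_cases hm0 : m = 0
      · subst hm0
        have he : Finset.Icc 1 (0 + 1 - 1) = (∅ : Finset ℕ) := by
          apply Finset.Icc_eq_empty; omega
        rw [he, Finset.sum_empty]
        have step := hic 1 (Finset.mem_Icc.mpr ⟨le_refl 1, h2⟩)
          0 (Finset.mem_Icc.mpr ⟨Nat.zero_le 0, Nat.zero_le n⟩)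
        have hz : dot d (q' 0) (θ 1) = 0 := by
          rw [dot]
          exact Finset.sum_eq_zero fun k hk => by rw [hm.1 k hk, zero_mul]
        rw [hm.2.1, hz] at step
        linarith [step]
      · have ih := ihm (by omega) (by omega)
        have step := hic (m + 1) (Finset.mem_Icc.mpr ⟨by omega, h2⟩)
          m (Finset.mem_Icc.mpr ⟨Nat.zero_le m, by omega⟩)
        have e1 : Finset.Icc 1 (m + 1 - 1) = Finset.Icc 1 ((m - 1) + 1) := by
          congr 1; omega
        rw [e1, Finset.sum_Icc_succ_top (by omega : 1 ≤ (m - 1) + 1)]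
        have e2 : (m - 1) + 1 = m := by omega
        rw [e2]
        have hDm : D m = dot d (q' m) (θ (m + 1)) - dot d (q' m) (θ m) := rfl
        linarith [ih, step]
  have hbound : revenue n f t' ≤ ∑ i ∈ Finset.Icc 1 n,
      (f i * dot d (q' i) (θ i) - f i * ∑ m ∈ Finset.Icc 1 (i - 1), D m) := by
    rw [revenue]
    apply Finset.sum_le_sum
    intro i hi
    have hfi : 0 < f i := hf.1 i hi
    rw [Finset.mem_Icc] at hi
    have h1 := hu i hi.1 hi.2
    have h3 : f i * (∑ m ∈ Finset.Icc 1 (i - 1), D m)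
        ≤ f i * (dot d (q' i) (θ i) - t' i) :=
      mul_le_mul_of_nonneg_left h1 (le_of_lt hfi)
    nlinarith [h3]
  have hswap : (∑ i ∈ Finset.Icc 1 n, f i * ∑ m ∈ Finset.Icc 1 (i - 1), D m)
      = ∑ m ∈ Finset.Icc 1 n, (1 - Fc f m) * D m := by
    have step1 : ∀ i ∈ Finset.Icc 1 n, f i * ∑ m ∈ Finset.Icc 1 (i - 1), D m
        = ∑ m ∈ Finset.Icc 1 n, (if m + 1 ≤ i then f i * D m else 0) := by
      intro i hi
      rw [Finset.mem_Icc] at hi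
      rw [← Finset.sum_filter]
      have hfil : Finset.filter (fun m => m + 1 ≤ i) (Finset.Icc 1 n)
          = Finset.Icc 1 (i - 1) := by
        ext x; simp only [Finset.mem_filter, Finset.mem_Icc]; omega
      rw [hfil, Finset.mul_sum]
    rw [Finset.sum_congr rfl step1, Finset.sum_comm]
    apply Finset.sum_congr rfl
    intro m hmem
    rw [Finset.mem_Icc] at hmem
    rw [← Finset.sum_filter]
    have hfil : Finset.filter (fun i => m + 1 ≤ i) (Finset.Icc 1 n)
        = Finset.Icc (m + 1) n := by
      ext x; simp only [Finset.mem_filter, Finset.mem_Icc]; omega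
    rw [hfil, ← Finset.sum_mul, aux_sum_tail n f hf m hmem.2]
  have hvw : vw d n f (initVirt n θ f) q'
      = ∑ i ∈ Finset.Icc 1 n, (f i * dot d (q' i) (θ i) - (1 - Fc f i) * D i) := by
    rw [vw]
    apply Finset.sum_congr rfl
    intro i hi
    have hDi : (1 - Fc f i) * D i = ∑ k ∈ Finset.Icc 1 d,
        (1 - Fc f i) * (q' i k * θ (i + 1) k - q' i k * θ i k) := by
      rw [hD]
      simp only [dot]
      rw [← Finset.sum_sub_distrib, Finset.mul_sum]
    rw [hDi, dot, Finset.mul_sum, Finset.mul_sum, ← Finset.sum_sub_distrib]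
    apply Finset.sum_congr rfl
    intro k hk
    have hfv := aux_f_virt n θ f hf i hi k
    linear_combination (q' i k) * hfv
  calc revenue n f t'
      ≤ ∑ i ∈ Finset.Icc 1 n,
          (f i * dot d (q' i) (θ i) - f i * ∑ m ∈ Finset.Icc 1 (i - 1), D m) := hbound
    _ = (∑ i ∈ Finset.Icc 1 n, f i * dot d (q' i) (θ i))
          - ∑ i ∈ Finset.Icc 1 n, f i * ∑ m ∈ Finset.Icc 1 (i - 1), D m :=
        Finset.sum_sub_distrib _ _
    _ = (∑ i ∈ Finset.Icc 1 n, f i * dot d (q' i) (θ i))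
          - ∑ i ∈ Finset.Icc 1 n, (1 - Fc f i) * D i := by rw [hswap]
    _ = ∑ i ∈ Finset.Icc 1 n, (f i * dot d (q' i) (θ i) - (1 - Fc f i) * D i) :=
        (Finset.sum_sub_distrib _ _).symm
    _ = vw d n f (initVirt n θ f) q' := hvw.symm

lemma aux_vw_le (d n : ℕ) (θ : ℕ → ℕ → ℝ) (f : ℕ → ℝ) (hf : IsProb n f)
    (cut : ℕ → ℕ) (hcut : ∀ k ∈ Finset.Icc 1 d, cut k ∈ Finset.Icc 1 n)
    (hreg : Regular d n θ f cut)
    (q' : ℕ → ℕ → ℝ) (hq' : InUnitCube d n q') :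
    vw d n f (initVirt n θ f) q' ≤ vw d n f (initVirt n θ f) (cutAlloc cut) := by
  rw [vw, vw]
  apply Finset.sum_le_sum
  intro i hi
  have hfi : 0 ≤ f i := (hf.1 i hi).le
  apply mul_le_mul_of_nonneg_left _ hfi
  apply Finset.sum_le_sum
  intro k hk
  have hck := hcut k hk
  obtain ⟨hq0, hq1⟩ := hq' i hi k hk
  simp only [cutAlloc]
  by_cases h : cut k ≤ i
  · rw [if_pos h, one_mul]
    have hφ : 0 ≤ initVirt n θ f i k := (hreg k hk (cut k) hck i hi le_rfl h).2
    exact mul_le_of_le_one_left hφ hq1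
  · rw [if_neg h, zero_mul]
    have hφ : initVirt n θ f i k ≤ 0 :=
      (hreg k hk i hi (cut k) hck (by omega) le_rfl).1
    nlinarith

lemma aux_rev_eq (d n : ℕ) (θ : ℕ → ℕ → ℝ) (f : ℕ → ℝ) (hf : IsProb n f)
    (cut : ℕ → ℕ) (hcut : ∀ k ∈ Finset.Icc 1 d, cut k ∈ Finset.Icc 1 n) :
    revenue n f (fun i => ∑ k ∈ Finset.Icc 1 d, if cut k ≤ i then θ (cut k) k else 0)
      = vw d n f (initVirt n θ f) (cutAlloc cut) := by
  rw [revenue, vw]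
  have L : ∀ g : ℕ → ℕ → ℝ,
      (∑ i ∈ Finset.Icc 1 n, f i * ∑ k ∈ Finset.Icc 1 d, g i k)
        = ∑ k ∈ Finset.Icc 1 d, ∑ i ∈ Finset.Icc 1 n, f i * g i k := by
    intro g
    rw [← Finset.sum_comm]
    exact Finset.sum_congr rfl fun i _ => Finset.mul_sum _ _ _
  rw [L (fun i k => if cut k ≤ i then θ (cut k) k else 0),
    L (fun i k => cutAlloc cut i k * initVirt n θ f i k)]
  apply Finset.sum_congr rfl
  intro k hk
  have hck := hcut k hk
  rw [Finset.mem_Icc] at hck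
  have hfil : Finset.filter (fun i => cut k ≤ i) (Finset.Icc 1 n)
      = Finset.Icc (cut k) n := by
    ext x; simp only [Finset.mem_filter, Finset.mem_Icc]; omega
  have htel := aux_telescope n θ f hf k (n - cut k) (cut k) rfl hck.1 hck.2
  calc (∑ i ∈ Finset.Icc 1 n, f i * (if cut k ≤ i then θ (cut k) k else 0))
      = ∑ i ∈ Finset.Icc 1 n, (if cut k ≤ i then f i * θ (cut k) k else 0) := by
        apply Finset.sum_congr rfl; intro i _; split_ifs <;> ring
    _ = ∑ i ∈ Finset.Icc (cut k) n, f i * θ (cut k) k := by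
        rw [← Finset.sum_filter, hfil]
    _ = (∑ i ∈ Finset.Icc (cut k) n, f i) * θ (cut k) k := by rw [Finset.sum_mul]
    _ = ∑ i ∈ Finset.Icc (cut k) n, f i * initVirt n θ f i k := htel.symm
    _ = ∑ i ∈ Finset.Icc 1 n, (if cut k ≤ i then f i * initVirt n θ f i k else 0) := by
        rw [← Finset.sum_filter, hfil]
    _ = ∑ i ∈ Finset.Icc 1 n, f i * (cutAlloc cut i k * initVirt n θ f i k) := by
        apply Finset.sum_congr rfl; intro i _
        simp only [cutAlloc]; split_ifs <;> ring

/-- **Theorem 1 (optimality of upgrade pricing for regular distributions).**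
If the instance is compatibly weakly monotone and regular w.r.t. cutoffs `i^1,…,i^d`,
then there exist transfers making the cutoff allocation `q_i^k = 1[i ≥ i^k]` an optimal
IC-IR mechanism, and this mechanism is an upgrade pricing mechanism. -/
theorem upgrade_pricing_optimal_regular
    (d n : ℕ) (hd : 1 ≤ d) (hn : 1 ≤ n)
    (θ : ℕ → ℕ → ℝ) (hθ : ∀ i ∈ Finset.Icc 1 n, ∀ k ∈ Finset.Icc 1 d, 0 ≤ θ i k)
    (f : ℕ → ℝ) (hf : IsProb n f)
    (cut : ℕ → ℕ) (hcut : ∀ k ∈ Finset.Icc 1 d, cut k ∈ Finset.Icc 1 n)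
    (hwm : WeaklyMonotone d n θ cut) (hreg : Regular d n θ f cut) :
    ∃ t : ℕ → ℝ,
      IsMechanism d n (cutAlloc cut) t ∧ ICIR d n θ (cutAlloc cut) t ∧
      Optimal d n θ f (cutAlloc cut) t ∧ UpgradePricing d n (cutAlloc cut) := by
  classical
  set t : ℕ → ℝ :=
    (fun i => ∑ k ∈ Finset.Icc 1 d, if cut k ≤ i then θ (cut k) k else 0) with ht
  have hmech : IsMechanism d n (cutAlloc cut) t := by
    refine ⟨?_, ?_, ?_⟩
    · intro k hk
      have h := hcut k hk
      rw [Finset.mem_Icc] at h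
      simp only [cutAlloc]
      rw [if_neg (by omega)]
    · rw [ht]
      apply Finset.sum_eq_zero
      intro k hk
      have h := hcut k hk
      rw [Finset.mem_Icc] at h
      rw [if_neg (by omega)]
    · intro i _ k _
      simp only [cutAlloc]
      split_ifs <;> norm_num
  have hicir : ICIR d n θ (cutAlloc cut) t := by
    intro j hj i hi
    rw [Finset.mem_Icc] at hj hi
    rw [ge_iff_le]
    simp only [ht, dot, cutAlloc]
    rw [← Finset.sum_sub_distrib, ← Finset.sum_sub_distrib]
    apply Finset.sum_le_sum
    intro k hk
    have hck := hcut k hk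
    split_ifs with h1 h2 h2
    · exact le_refl _
    · have hle : θ j k ≤ θ (cut k) k :=
        hwm k hk j (Finset.mem_Icc.mpr hj) (cut k) hck (by omega) le_rfl
      nlinarith
    · have hle : θ (cut k) k ≤ θ j k :=
        hwm k hk (cut k) hck j (Finset.mem_Icc.mpr hj) le_rfl h2
      nlinarith
    · nlinarith
  have hup : UpgradePricing d n (cutAlloc cut) := by
    intro i _ j _
    rcases le_total i j with h | h
    · left
      intro k _
      simp only [cutAlloc]
      split_ifs with h1 h2 <;> norm_num <;> omega
    · right
      intro k _
      simp only [cutAlloc]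
      split_ifs with h1 h2 <;> norm_num <;> omega
  have hrev : revenue n f t = vw d n f (initVirt n θ f) (cutAlloc cut) := by
    rw [ht]; exact aux_rev_eq d n θ f hf cut hcut
  refine ⟨t, hmech, hicir, ⟨hmech, hicir, ?_⟩, hup⟩
  intro q' t' hm' hic'
  have h1 := aux_rev_le_vw d n θ f hf q' t' hm' hic'
  have h2 := aux_vw_le d n θ f hf cut hcut hreg q' hm'.2.2
  linarith
end
end

section
/- Implementability of the cutoff allocation under weak monotonicity, with binding adjacent constraints: Suppose the instance is weakly monotone with respect to cutoffs i^1, …, i^d ∈ {1,…,n}. Define q_i^k := 1 if i ≥ i^k and 0 otherwise, t_i := Σ_{k : i^k ≤ i} θ_{i^k}^k for i ∈ {1,…,n}, and (q_0,t_0) := (0,0). Then (q,t) is IC-IR, and every adjacent downward incentive constraint binds: ⟨q_i, θ_i⟩ − t_i = ⟨q_{i−1}, θ_i⟩ − t_{i−1} for all i ∈ {1,…,n}. -/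
open Finset

noncomputable section

/-- **Implementability of the cutoff allocation under weak monotonicity**, with binding
adjacent downward incentive constraints, at the transfers `t_i = ∑_{k : i^k ≤ i} θ_{i^k}^k`. -/
theorem cutoff_implementable
    (d n : ℕ) (hd : 1 ≤ d) (hn : 1 ≤ n)
    (θ : ℕ → ℕ → ℝ) (hθ : ∀ i ∈ Finset.Icc 1 n, ∀ k ∈ Finset.Icc 1 d, 0 ≤ θ i k)
    (f : ℕ → ℝ) (hf : IsProb n f)
    (cut : ℕ → ℕ) (hcut : ∀ k ∈ Finset.Icc 1 d, cut k ∈ Finset.Icc 1 n)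
    (hwm : WeaklyMonotone d n θ cut) :
    IsMechanism d n (cutAlloc cut)
        (fun i => ∑ k ∈ Finset.Icc 1 d, if cut k ≤ i then θ (cut k) k else 0) ∧
    ICIR d n θ (cutAlloc cut)
        (fun i => ∑ k ∈ Finset.Icc 1 d, if cut k ≤ i then θ (cut k) k else 0) ∧
    ∀ i ∈ Finset.Icc 1 n,
      dot d (cutAlloc cut i) (θ i) -
          (∑ k ∈ Finset.Icc 1 d, if cut k ≤ i then θ (cut k) k else 0) =
        dot d (cutAlloc cut (i - 1)) (θ i) -
          (∑ k ∈ Finset.Icc 1 d, if cut k ≤ i - 1 then θ (cut k) k else 0) := by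
  have hdot : ∀ i j : ℕ, dot d (cutAlloc cut i) (θ j)
      - (∑ k ∈ Finset.Icc 1 d, if cut k ≤ i then θ (cut k) k else 0)
      = ∑ k ∈ Finset.Icc 1 d, (if cut k ≤ i then θ j k - θ (cut k) k else 0) := by
    intro i j
    unfold dot cutAlloc
    rw [← Finset.sum_sub_distrib]
    refine Finset.sum_congr rfl fun k hk => ?_
    by_cases h : cut k ≤ i <;> simp [h]
  refine ⟨⟨fun k hk => ?_, ?_, fun i hi k hk => ?_⟩, fun j hj i hi => ?_, fun i hi => ?_⟩
  · have := hcut k hk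
    simp only [Finset.mem_Icc] at this
    simp [cutAlloc]; omega
  · refine Finset.sum_eq_zero fun k hk => ?_
    have := hcut k hk
    simp only [Finset.mem_Icc] at this
    rw [if_neg (by omega)]
  · unfold cutAlloc
    by_cases h : cut k ≤ i <;> simp [h]
  · rw [ge_iff_le, sub_le_sub_iff, ← sub_le_sub_iff, hdot, hdot]
    refine Finset.sum_le_sum fun k hk => ?_
    have hck := hcut k hk
    simp only [Finset.mem_Icc] at hck hj hi
    by_cases h1 : cut k ≤ i <;> by_cases h2 : cut k ≤ j <;> simp [h1, h2]
    · have : θ j k ≤ θ (cut k) k :=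
        hwm k hk j (by simp; omega) (cut k) (by simp; omega) (by omega) le_rfl
      linarith
    · have : θ (cut k) k ≤ θ j k :=
        hwm k hk (cut k) (by simp; omega) j (by simp; omega) le_rfl h2
      linarith
  · rw [hdot, hdot]
    refine Finset.sum_congr rfl fun k hk => ?_
    simp only [Finset.mem_Icc] at hi
    by_cases h1 : cut k ≤ i - 1
    · rw [if_pos h1, if_pos (by omega)]
    · by_cases h2 : cut k ≤ i
      · have : cut k = i := by omega
        rw [if_pos h2, if_neg h1, this, sub_self]
      · rw [if_neg h1, if_neg h2]
end
end

section
/- Lemma 2 (ordered normalized virtual values under monotone MRS): Suppose the type space has monotone MRS. Then for every nonnegative downward flow λ (λ_ji ≥ 0 for all j ∈ {1,…,n}, i ∈ {0,1,…,n}; f_i = Σ_{j=0}^n λ_ij − Σ_{j=1}^n λ_ji for all i; and λ_ji > 0 with j,i ∈ {1,…,n} implies j > i), every i ∈ {1,…,n}, and all items 1 ≤ k ≤ l ≤ d, one has φ_i^{λ,k}/θ_i^k ≥ φ_i^{λ,l}/θ_i^l. -/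
open Finset

noncomputable section

/-- **Lemma 2 (ordered normalized virtual values under monotone MRS)**: for every
nonnegative downward flow `λ`, type `i`, and items `k ≤ l`,
`φ_i^{λ,k}/θ_i^k ≥ φ_i^{λ,l}/θ_i^l`. -/
theorem ordered_normalized_virtual_values
    (d n : ℕ) (hd : 1 ≤ d) (hn : 1 ≤ n)
    (θ : ℕ → ℕ → ℝ) (f : ℕ → ℝ) (hf : IsProb n f)
    (hmrs : MonotoneMRS d n θ)
    (lam : ℕ → ℕ → ℝ) (hnn : NonnegLam n lam) (hflow : FlowConservation n f lam)
    (hdown : Downward n lam) :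
    ∀ i ∈ Finset.Icc 1 n, ∀ k ∈ Finset.Icc 1 d, ∀ l ∈ Finset.Icc 1 d, k ≤ l →
      virt n θ f lam i l / θ i l ≤ virt n θ f lam i k / θ i k := by
  intro i hi k hk l hl hkl
  have hi' := hi
  simp only [Finset.mem_Icc] at hi' hk hl
  have hfi : 0 < f i := hf.1 i hi
  have hik : 0 < θ i k := hmrs.1 i hi k (Finset.mem_Icc.mpr hk)
  have hil : 0 < θ i l := hmrs.1 i hi l (Finset.mem_Icc.mpr hl)
  have key : ∀ j ∈ Finset.Icc 1 n,
      lam j i * (θ j k - θ i k) / θ i k ≤ lam j i * (θ j l - θ i l) / θ i l := by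
    intro j hj
    rcases lt_or_eq_of_le (hnn j hj i (Finset.mem_Icc.mpr ⟨Nat.zero_le _, hi'.2⟩)) with hpos | hz
    · have hij : i < j := hdown j hj i hi hpos
      have hjk : 0 < θ j k := hmrs.1 j hj k (Finset.mem_Icc.mpr hk)
      have hjl : 0 < θ j l := hmrs.1 j hj l (Finset.mem_Icc.mpr hl)
      have hm := hmrs.2 i hi j hj (le_of_lt hij) k (Finset.mem_Icc.mpr hk)
        l (Finset.mem_Icc.mpr hl) hkl
      -- θ i l * θ j k ≤ θ j l * θ i k
      rw [div_le_div_iff₀ hik hjk] at hm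
      have hq : (θ j k - θ i k) / θ i k ≤ (θ j l - θ i l) / θ i l := by
        rw [div_le_div_iff₀ hik hil]
        nlinarith
      rw [mul_div_assoc, mul_div_assoc]
      exact mul_le_mul_of_nonneg_left hq (le_of_lt hpos)
    · rw [← hz]
      simp
  have key' : (∑ j ∈ Finset.Icc 1 n, lam j i * (θ j k - θ i k)) / θ i k ≤
      (∑ j ∈ Finset.Icc 1 n, lam j i * (θ j l - θ i l)) / θ i l := by
    rw [Finset.sum_div, Finset.sum_div]
    exact Finset.sum_le_sum key
  unfold virt
  rw [sub_div, sub_div, div_self (ne_of_gt hik), div_self (ne_of_gt hil)]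
  apply sub_le_sub_left
  rw [mul_div_assoc, mul_div_assoc]
  exact mul_le_mul_of_nonneg_left key' (by positivity)
end
end

section
/- Lemma 3 (virtual welfare maximization from neighboring items): Suppose the type space has monotone MRS and let i^1 ≤ i^2 ≤ … ≤ i^d be cutoffs in {1,…,n}; set i^0 := 1 and i^{d+1} := n. Let λ be a nonnegative downward flow (λ_ji ≥ 0; f_i = Σ_{j=0}^n λ_ij − Σ_{j=1}^n λ_ji for all i ∈ {1,…,n}; λ_ji > 0 with j,i ∈ {1,…,n} implies j > i) such that for every k ∈ {0,1,…,d} and every i with i^k ≤ i ≤ i^{k+1}: φ_i^{λ,k} ≥ 0 if k ≥ 1, and φ_i^{λ,k+1} ≤ 0 if k ≤ d−1. Then the allocation q_i^k = 1 if i ≥ i^k and 0 otherwise maximizes the virtual welfare Σ_{i=1}^n f_i ⟨q'_i, φ_i^λ⟩ over all allocations q'_1, …, q'_n ∈ [0,1]^d. -/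
open Finset

noncomputable section

/-- Auxiliary: under monotone MRS, downward nonnegative flow, the ratio inequality
`(θ_i^k / θ_i^l) φ_i^l ≤ φ_i^k` for `k ≤ l`. -/
lemma virt_ratio (d n : ℕ) (θ : ℕ → ℕ → ℝ) (f : ℕ → ℝ) (lam : ℕ → ℕ → ℝ)
    (hf : IsProb n f) (hmrs : MonotoneMRS d n θ) (hnn : NonnegLam n lam)
    (hdown : Downward n lam) {i k l : ℕ} (hi : i ∈ Finset.Icc 1 n)
    (hk : k ∈ Finset.Icc 1 d) (hl : l ∈ Finset.Icc 1 d) (hkl : k ≤ l) :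
    θ i k / θ i l * virt n θ f lam i l ≤ virt n θ f lam i k := by
  have hfi : 0 < f i := hf.1 i hi
  have ha : 0 < θ i k := hmrs.1 i hi k hk
  have hb : 0 < θ i l := hmrs.1 i hi l hl
  have hi0 : i ∈ Finset.Icc 0 n := by
    rw [Finset.mem_Icc] at hi ⊢; omega
  have hsum : ∑ j ∈ Finset.Icc 1 n, lam j i * (θ j k - θ i k)
      ≤ θ i k / θ i l * ∑ j ∈ Finset.Icc 1 n, lam j i * (θ j l - θ i l) := by
    rw [Finset.mul_sum]
    apply Finset.sum_le_sum
    intro j hj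
    have hlam : 0 ≤ lam j i := hnn j hj i hi0
    rcases hlam.lt_or_eq with hpos | hzero
    · have hij : i < j := hdown j hj i hi hpos
      have hjk : 0 < θ j k := hmrs.1 j hj k hk
      have hmrs2 : θ i l / θ i k ≤ θ j l / θ j k :=
        hmrs.2 i hi j hj hij.le k hk l hl hkl
      have hcross : θ i l * θ j k ≤ θ j l * θ i k := by
        rw [div_le_div_iff₀ ha hjk] at hmrs2; linarith
      have hkey : θ j k - θ i k ≤ θ i k / θ i l * (θ j l - θ i l) := by
        have h1 : θ i k / θ i l * θ i l = θ i k := div_mul_cancel₀ _ hb.ne'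
        have h2 : θ j k ≤ θ i k / θ i l * θ j l := by
          rw [div_mul_eq_mul_div, le_div_iff₀ hb]; linarith
        rw [mul_sub, h1]; linarith
      calc lam j i * (θ j k - θ i k) ≤ lam j i * (θ i k / θ i l * (θ j l - θ i l)) :=
            mul_le_mul_of_nonneg_left hkey hlam
        _ = θ i k / θ i l * (lam j i * (θ j l - θ i l)) := by ring
    · rw [← hzero]; ring_nf; simp
  have hc : (0:ℝ) ≤ 1 / f i := by positivity
  have h2 := mul_le_mul_of_nonneg_left hsum hc
  have h1 : θ i k / θ i l * θ i l = θ i k := div_mul_cancel₀ _ hb.ne'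
  unfold virt
  rw [mul_sub, h1]
  have : 1 / f i * (θ i k / θ i l * ∑ j ∈ Finset.Icc 1 n, lam j i * (θ j l - θ i l))
      = θ i k / θ i l * (1 / f i * ∑ j ∈ Finset.Icc 1 n, lam j i * (θ j l - θ i l)) := by
    ring
  linarith [h2, this.le, this.ge]

/-- **Lemma 3 (virtual welfare maximization from neighboring items)**: under monotone MRS,
if a nonnegative downward flow has `φ_i^{λ,k} ≥ 0` and `φ_i^{λ,k+1} ≤ 0` for all
`i^k ≤ i ≤ i^{k+1}` (with `i^0 = 1`, `i^{d+1} = n`), then the cutoff allocation maximizes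
virtual welfare. -/
theorem vw_max_neighboring
    (d n : ℕ) (hd : 1 ≤ d) (hn : 1 ≤ n)
    (θ : ℕ → ℕ → ℝ) (f : ℕ → ℝ) (hf : IsProb n f)
    (hmrs : MonotoneMRS d n θ)
    (cut : ℕ → ℕ) (hcut : ∀ k ∈ Finset.Icc 1 d, cut k ∈ Finset.Icc 1 n)
    (hcutmono : ∀ k, 1 ≤ k → k + 1 ≤ d → cut k ≤ cut (k + 1))
    (lam : ℕ → ℕ → ℝ) (hnn : NonnegLam n lam) (hflow : FlowConservation n f lam)
    (hdown : Downward n lam)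
    (hsign : ∀ k, k ≤ d → ∀ i, extCut n d cut k ≤ i → i ≤ extCut n d cut (k + 1) →
      (1 ≤ k → 0 ≤ virt n θ f lam i k) ∧ (k + 1 ≤ d → virt n θ f lam i (k + 1) ≤ 0)) :
    ∀ q' : ℕ → ℕ → ℝ, InUnitCube d n q' →
      vw d n f (virt n θ f lam) q' ≤ vw d n f (virt n θ f lam) (cutAlloc cut) := by
  intro q' hq'
  have hsignall : ∀ i ∈ Finset.Icc 1 n, ∀ k ∈ Finset.Icc 1 d,
      (cut k ≤ i → 0 ≤ virt n θ f lam i k) ∧ (i < cut k → virt n θ f lam i k ≤ 0) := by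
    intro i hi k hk
    obtain ⟨hk1, hkd⟩ := Finset.mem_Icc.mp hk
    obtain ⟨hi1, hin⟩ := Finset.mem_Icc.mp hi
    constructor
    · intro hik
      set P : ℕ → Prop := fun m => extCut n d cut m ≤ i with hPdef
      have hPk : P k := by
        simp only [P, extCut, if_neg (by omega : k ≠ 0), if_pos hkd]
        exact hik
      set m := Nat.findGreatest P d with hm
      have hPm : P m := Nat.findGreatest_spec hkd hPk
      have hkm : k ≤ m := Nat.le_findGreatest hkd hPk
      have hmd : m ≤ d := Nat.findGreatest_le d
      have hub : i ≤ extCut n d cut (m + 1) := by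
        rcases eq_or_lt_of_le hmd with h | h
        · simp only [extCut, if_neg (by omega : m + 1 ≠ 0),
            if_neg (by omega : ¬ (m + 1 ≤ d))]
          exact hin
        · by_contra hcon
          push_neg at hcon
          have hng : ¬ P (m + 1) :=
            Nat.findGreatest_is_greatest (P := P) (n := d) (by omega) (by omega)
          exact hng hcon.le
      have hvm : 0 ≤ virt n θ f lam i m := (hsign m hmd i hPm hub).1 (by omega)
      have hmIcc : m ∈ Finset.Icc 1 d := Finset.mem_Icc.mpr ⟨by omega, hmd⟩
      have hr := virt_ratio d n θ f lam hf hmrs hnn hdown hi hk hmIcc hkm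
      have hrat : (0:ℝ) ≤ θ i k / θ i m :=
        div_nonneg (hmrs.1 i hi k hk).le (hmrs.1 i hi m hmIcc).le
      exact le_trans (mul_nonneg hrat hvm) hr
    · intro hik
      set P : ℕ → Prop := fun m => extCut n d cut m ≤ i with hPdef
      have hP0 : P 0 := by
        simp only [P, extCut, if_pos rfl]; exact hi1
      set m := Nat.findGreatest P (k - 1) with hm
      have hPm : P m := Nat.findGreatest_spec (Nat.zero_le _) hP0
      have hmk : m ≤ k - 1 := Nat.findGreatest_le (k - 1)
      have hub : i ≤ extCut n d cut (m + 1) := by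
        rcases eq_or_lt_of_le (by omega : m + 1 ≤ k) with h | h
        · rw [h]
          simp only [extCut, if_neg (by omega : k ≠ 0), if_pos hkd]
          omega
        · by_contra hcon
          push_neg at hcon
          have hng : ¬ P (m + 1) :=
            Nat.findGreatest_is_greatest (P := P) (n := k - 1) (by omega) (by omega)
          exact hng hcon.le
      have hvm : virt n θ f lam i (m + 1) ≤ 0 :=
        (hsign m (by omega) i hPm hub).2 (by omega)
      have hmIcc : m + 1 ∈ Finset.Icc 1 d := Finset.mem_Icc.mpr ⟨by omega, by omega⟩
      have hr := virt_ratio d n θ f lam hf hmrs hnn hdown hi hmIcc hk (by omega)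
      have hrat : (0:ℝ) < θ i (m + 1) / θ i k :=
        div_pos (hmrs.1 i hi (m + 1) hmIcc) (hmrs.1 i hi k hk)
      nlinarith [hr, hrat, hvm]
  unfold vw
  apply Finset.sum_le_sum
  intro i hi
  apply mul_le_mul_of_nonneg_left _ (hf.1 i hi).le
  apply Finset.sum_le_sum
  intro k hk
  obtain ⟨h1, h2⟩ := hsignall i hi k hk
  obtain ⟨hq0, hq1⟩ := hq' i hi k hk
  by_cases hc : cut k ≤ i
  · simp only [cutAlloc, if_pos hc, one_mul]
    exact mul_le_of_le_one_left (h1 hc) hq1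
  · simp only [cutAlloc, if_neg hc, zero_mul]
    exact mul_nonpos_of_nonneg_of_nonpos hq0 (h2 (Nat.lt_of_not_le hc))
end
end

section
/- Iteration invariant of the Ironing Algorithm (Lemma 4, per-step form): Let i ∈ {1,…,n}, let γ ∈ [0,1], and let λ be a nonnegative matrix satisfying flow conservation (f_r = Σ_{j=0}^n λ_rj − Σ_{j=1}^n λ_jr for all r ∈ {1,…,n}) such that λ_ij = 0 for every j ∈ {0,1,…,n} with j ≠ i−1. Then the ironing update λ'(γ) is nonnegative and satisfies flow conservation; moreover, if λ is downward then so is λ'(γ). -/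
open Finset

noncomputable section

/-- **Iteration invariant of the Ironing Algorithm (Lemma 4, per-step form)**: the ironing
update of a nonnegative flow whose only outgoing edge from type `i` goes to `i−1` is again
a nonnegative flow, and downwardness is preserved. -/
theorem iron_update_flow
    (d n : ℕ) (hd : 1 ≤ d) (hn : 1 ≤ n)
    (θ : ℕ → ℕ → ℝ) (f : ℕ → ℝ) (hf : IsProb n f)
    (lam : ℕ → ℕ → ℝ) (i : ℕ) (hi : i ∈ Finset.Icc 1 n)
    (γ : ℝ) (hγ : γ ∈ Set.Icc (0 : ℝ) 1)
    (hnn : NonnegLam n lam) (hflow : FlowConservation n f lam)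
    (hout : ∀ j ∈ Finset.Icc 0 n, j ≠ i - 1 → lam i j = 0) :
    NonnegLam n (ironUpdate n lam i γ) ∧
    FlowConservation n f (ironUpdate n lam i γ) ∧
    (Downward n lam → Downward n (ironUpdate n lam i γ)) := by
  rw [Finset.mem_Icc] at hi
  obtain ⟨hi1, hin⟩ := hi
  obtain ⟨hγ0, hγ1⟩ := hγ
  set S : ℝ := ∑ j' ∈ Finset.Icc (i + 1) n, lam j' i with hS
  have hiIcc : i ∈ Finset.Icc 1 n := Finset.mem_Icc.mpr ⟨hi1, hin⟩
  have hiIcc0 : i ∈ Finset.Icc 0 n := Finset.mem_Icc.mpr ⟨Nat.zero_le _, hin⟩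
  have hi1Icc0 : i - 1 ∈ Finset.Icc 0 n := Finset.mem_Icc.mpr ⟨Nat.zero_le _, by omega⟩
  have hSnn : 0 ≤ S := by
    apply Finset.sum_nonneg
    intro j hj
    rw [Finset.mem_Icc] at hj
    exact hnn j (Finset.mem_Icc.mpr ⟨by omega, hj.2⟩) i hiIcc0
  -- key bound: lam i (i-1) ≥ f i + (sum of all inflows at i) ≥ (1-γ)·S
  have hrow_i : ∑ c ∈ Finset.Icc 0 n, lam i c = lam i (i - 1) := by
    apply Finset.sum_eq_single_of_mem (i - 1) hi1Icc0
    intro b hb hbne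
    exact hout b hb hbne
  have hSle : S ≤ ∑ j ∈ Finset.Icc 1 n, lam j i := by
    apply Finset.sum_le_sum_of_subset_of_nonneg
    · intro x hx; rw [Finset.mem_Icc] at hx ⊢; omega
    · intro j hj _; exact hnn j hj i hiIcc0
  have hkey : (1 - γ) * S ≤ lam i (i - 1) := by
    have hfc := hflow i hiIcc
    rw [hrow_i] at hfc
    have hfi : 0 < f i := hf.1 i hiIcc
    nlinarith [hSnn]
  refine ⟨?_, ?_, ?_⟩
  · -- Nonnegativity
    intro j hj r hr
    have hj' := Finset.mem_Icc.mp hj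
    have hr' := Finset.mem_Icc.mp hr
    unfold ironUpdate
    split_ifs with h1 h2 h3
    · exact mul_nonneg hγ0 (hnn j hj i hiIcc0)
    · have := hnn j hj (i - 1) hi1Icc0
      have := hnn j hj i hiIcc0
      nlinarith
    · rw [← hS]
      obtain ⟨hji, _⟩ := h3
      subst hji
      linarith [hkey]
    · exact hnn j hj r hr
  · -- Flow conservation
    have hdec : ∀ j r, ironUpdate n lam i γ j r =
        lam j r + (if i < j ∧ r = i then (γ - 1) * lam j i else 0)
          + (if i < j ∧ r = i - 1 then (1 - γ) * lam j i else 0)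
          + (if j = i ∧ r = i - 1 then -((1 - γ) * S) else 0) := by
      intro j r
      unfold ironUpdate
      rw [← hS]
      split_ifs <;>
        first
          | (exfalso; omega)
          | ring1
          | (have h' : r = i := by omega
             subst h'; ring1)
          | (have h' : r = i - 1 := by omega
             subst h'
             first
               | ring1
               | (have h'' : j = i := by omega
                  subst h''; ring1))
    have hrowsum : ∀ r ∈ Finset.Icc 1 n,
        ∑ c ∈ Finset.Icc 0 n, ironUpdate n lam i γ r c
          = ∑ c ∈ Finset.Icc 0 n, lam r c - (if r = i then (1 - γ) * S else 0) := by
      intro r hr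
      simp only [hdec]
      rw [Finset.sum_add_distrib, Finset.sum_add_distrib, Finset.sum_add_distrib]
      have e1 : ∑ c ∈ Finset.Icc 0 n, (if i < r ∧ c = i then (γ - 1) * lam r i else 0)
          = if i < r then (γ - 1) * lam r i else 0 := by
        by_cases h : i < r
        · simp only [h, true_and, if_true]
          rw [Finset.sum_ite_eq' (Finset.Icc 0 n) i (fun _ => (γ - 1) * lam r i),
            if_pos hiIcc0]
        · simp [h]
      have e2 : ∑ c ∈ Finset.Icc 0 n, (if i < r ∧ c = i - 1 then (1 - γ) * lam r i else 0)
          = if i < r then (1 - γ) * lam r i else 0 := by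
        by_cases h : i < r
        · simp only [h, true_and, if_true]
          rw [Finset.sum_ite_eq' (Finset.Icc 0 n) (i - 1) (fun _ => (1 - γ) * lam r i),
            if_pos hi1Icc0]
        · simp [h]
      have e3 : ∑ c ∈ Finset.Icc 0 n, (if r = i ∧ c = i - 1 then -((1 - γ) * S) else 0)
          = if r = i then -((1 - γ) * S) else 0 := by
        by_cases h : r = i
        · simp only [h, true_and, if_true]
          rw [Finset.sum_ite_eq' (Finset.Icc 0 n) (i - 1) (fun _ => -((1 - γ) * S)),
            if_pos hi1Icc0]
        · simp [h]
      rw [e1, e2, e3]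
      by_cases h1 : i < r <;> by_cases h2 : r = i <;> simp [h1, h2] <;> first | ring | omega
    have hfilter : Finset.filter (fun j => i < j) (Finset.Icc 1 n) = Finset.Icc (i + 1) n := by
      ext x
      simp only [Finset.mem_filter, Finset.mem_Icc]
      omega
    have hcolsum : ∀ r ∈ Finset.Icc 1 n,
        ∑ j ∈ Finset.Icc 1 n, ironUpdate n lam i γ j r
          = ∑ j ∈ Finset.Icc 1 n, lam j r - (if r = i then (1 - γ) * S else 0) := by
      intro r hr
      simp only [hdec]
      rw [Finset.sum_add_distrib, Finset.sum_add_distrib, Finset.sum_add_distrib]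
      have e1 : ∑ j ∈ Finset.Icc 1 n, (if i < j ∧ r = i then (γ - 1) * lam j i else 0)
          = if r = i then (γ - 1) * S else 0 := by
        by_cases h : r = i
        · simp only [h, and_true, if_true]
          rw [← Finset.sum_filter, hfilter, hS, ← Finset.mul_sum]
        · simp [h]
      have e2 : ∑ j ∈ Finset.Icc 1 n, (if i < j ∧ r = i - 1 then (1 - γ) * lam j i else 0)
          = if r = i - 1 then (1 - γ) * S else 0 := by
        by_cases h : r = i - 1
        · simp only [h, and_true, if_true]
          rw [← Finset.sum_filter, hfilter, hS, ← Finset.mul_sum]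
        · simp [h]
      have e3 : ∑ j ∈ Finset.Icc 1 n, (if j = i ∧ r = i - 1 then -((1 - γ) * S) else 0)
          = if r = i - 1 then -((1 - γ) * S) else 0 := by
        by_cases h : r = i - 1
        · simp only [h, and_true, if_true]
          rw [Finset.sum_ite_eq' (Finset.Icc 1 n) i (fun _ => -((1 - γ) * S)),
            if_pos hiIcc]
        · simp [h]
      rw [e1, e2, e3]
      have hne : ¬ (i = i - 1) := by omega
      have hne' : ¬ (i - 1 = i) := by omega
      by_cases h1 : r = i <;> by_cases h2 : r = i - 1
      · omega
      · simp only [h1, h2, hne, hne', if_true, if_false]; try ring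
      · simp only [h1, h2, hne, hne', if_true, if_false]; try ring
      · simp [h1, h2]
    intro r hr
    rw [hrowsum r hr, hcolsum r hr]
    have h := hflow r hr
    linarith [h]
  · -- Downwardness
    intro hdown j hj r hr hpos
    have hj' := Finset.mem_Icc.mp hj
    have hr' := Finset.mem_Icc.mp hr
    unfold ironUpdate at hpos
    split_ifs at hpos with h1 h2 h3
    · omega
    · omega
    · omega
    · exact hdown j hj r hr hpos
end
end
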